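/- arXiv:0809.0033 — 5 statements merged into one kernel-verified Lean document; each statement's English description precedes it below -/
import Mathlib

section
/- Let H = H₁ ⊗ H₂ be a Kronecker product of unitary matrices H₁ ∈ U(n₁), H₂ ∈ U(n₂), with n = n₁·n₂ total eigenvalues. Suppose all eigenvalues λ_i of H, except exactly one eigenvalue λ_{i₀} of multiplicity one, lie in {1, a} for some a ∈ ℂ with a ≠ ±1. Assume further that λ_{i₀} ≠ a², and that either λ_{i₀} ≠ 1/a or the eigenvalue 1 occurs with multiplicity strictly greater than n/2. Then n₁ = 1 or n₂ = 1. -/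
open Polynomial in
lemma my_charpoly_conj {n : Type*} [DecidableEq n] [Fintype n] {R : Type*} [CommRing R]
    (P A Q : Matrix n n R) (hPQ : P * Q = 1) (_hQP : Q * P = 1) :
    (P * A * Q).charpoly = A.charpoly := by
  have hmapPQ : P.map (C : R →+* R[X]) * Q.map C = 1 := by
    rw [← Matrix.map_mul, hPQ]
    simp
  have hch : Matrix.charmatrix (P * A * Q) = P.map C * A.charmatrix * Q.map C := by
    unfold Matrix.charmatrix
    simp only [RingHom.mapMatrix_apply]
    rw [mul_sub, sub_mul, ← Matrix.map_mul, ← Matrix.map_mul]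
    congr 1
    rw [mul_assoc, (Matrix.scalar_commute (X : R[X]) (fun r => Commute.all _ _) (Q.map C)).eq,
      ← mul_assoc, hmapPQ, one_mul]
  unfold Matrix.charpoly
  rw [hch, Matrix.det_mul, Matrix.det_mul]
  have h1 : (P.map (C : R →+* R[X])).det * (Q.map C).det = 1 := by
    rw [← Matrix.det_mul, hmapPQ, Matrix.det_one]
  calc (P.map (C : R →+* R[X])).det * A.charmatrix.det * (Q.map C).det
      = A.charmatrix.det * ((P.map C).det * (Q.map C).det) := by ring
    _ = A.charmatrix.det := by rw [h1, mul_one]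

open Polynomial in
lemma my_roots_charpoly_diagonal {n : Type*} [DecidableEq n] [Fintype n] (d : n → ℂ) :
    (Matrix.diagonal d).charpoly.roots = Finset.univ.val.map d := by
  have hch : (Matrix.diagonal d).charmatrix
      = Matrix.diagonal (fun i => (X : ℂ[X]) - C (d i)) := by
    refine Matrix.ext fun i j => ?_
    by_cases hij : i = j
    · subst hij; simp [Matrix.charmatrix_apply_eq]
    · rw [Matrix.charmatrix_apply_ne _ _ _ hij, Matrix.diagonal_apply_ne _ hij,
        Matrix.diagonal_apply_ne _ hij, map_zero, neg_zero]
  have h : (Matrix.diagonal d).charpoly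
      = ((Finset.univ.val.map d).map fun a => (X : ℂ[X]) - C a).prod := by
    unfold Matrix.charpoly
    rw [hch, Matrix.det_diagonal, Multiset.map_map]
    rw [Finset.prod_eq_multiset_prod]
    exact congrArg Multiset.prod (Multiset.map_congr rfl fun x _ => rfl)
  rw [h, Polynomial.roots_multiset_prod_X_sub_C]

open Module LinearMap Matrix in
lemma my_unitary_diag (n : ℕ) (H : Matrix (Fin n) (Fin n) ℂ)
    (hU : H ∈ Matrix.unitaryGroup (Fin n) ℂ) :
    ∃ (P Q : Matrix (Fin n) (Fin n) ℂ) (d : Fin n → ℂ),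
      P * Q = 1 ∧ Q * P = 1 ∧ H = P * Matrix.diagonal d * Q := by
  set V := EuclideanSpace ℂ (Fin n) with hV
  let bF : Basis (Fin n) ℂ V := PiLp.basisFun 2 ℂ (Fin n)
  let f : Module.End ℂ V := Matrix.toEuclideanLin H
  let fs : Module.End ℂ V := Matrix.toEuclideanLin Hᴴ
  have htoLin : ∀ M : Matrix (Fin n) (Fin n) ℂ,
      Matrix.toEuclideanLin M = Matrix.toLin bF bF M := fun M => rfl
  have hmul : ∀ M N : Matrix (Fin n) (Fin n) ℂ,
      Matrix.toEuclideanLin (M * N)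
        = Matrix.toEuclideanLin M * Matrix.toEuclideanLin N := by
    intro M N
    rw [htoLin, htoLin, htoLin, Matrix.toLin_mul bF bF bF]
    rfl
  have hU1 : H * Hᴴ = 1 := by
    have := Matrix.mem_unitaryGroup_iff.mp hU
    rwa [Matrix.star_eq_conjTranspose] at this
  have hU2 : Hᴴ * H = 1 := by
    have := Matrix.mem_unitaryGroup_iff'.mp hU
    rwa [Matrix.star_eq_conjTranspose] at this
  have hffs : f * fs = 1 := by
    rw [show (1 : Module.End ℂ V) = Matrix.toEuclideanLin 1 by
      rw [htoLin, Matrix.toLin_one]; rfl, ← hU1, hmul]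
  have hfsf : fs * f = 1 := by
    rw [show (1 : Module.End ℂ V) = Matrix.toEuclideanLin 1 by
      rw [htoLin, Matrix.toLin_one]; rfl, ← hU2, hmul]
  have hcomm : fs * f = f * fs := by rw [hffs, hfsf]
  have hadjf : fs = LinearMap.adjoint f := Matrix.toEuclideanLin_conjTranspose_eq_adjoint H
  -- the key normality fact
  have key : ∀ (μ : ℂ) (x : V),
      ((f - μ • 1) * (f - μ • 1)) x = 0 → (f - μ • 1) x = 0 := by
    intro μ x hx
    set g : Module.End ℂ V := f - μ • 1 with hg
    set g' : Module.End ℂ V := fs - (starRingEnd ℂ μ) • 1 with hg'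
    have hadj : ∀ u v : V, inner ℂ (g u) v = (inner ℂ u (g' v) : ℂ) := by
      intro u v
      simp only [hg, hg', LinearMap.sub_apply, LinearMap.smul_apply, Module.End.one_apply,
        inner_sub_left, inner_sub_right, inner_smul_left, inner_smul_right, hadjf,
        LinearMap.adjoint_inner_right, RingHom.id_apply, starRingEnd_self_apply]
      rw [inner_sub_left, inner_sub_right, inner_smul_left, inner_smul_right,
        LinearMap.adjoint_inner_right]
    have hadj' : ∀ u v : V, inner ℂ u (g v) = (inner ℂ (g' u) v : ℂ) := by
      intro u v
      simp only [hg, hg', LinearMap.sub_apply, LinearMap.smul_apply, Module.End.one_apply,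
        inner_sub_left, inner_sub_right, inner_smul_left, inner_smul_right, hadjf,
        LinearMap.adjoint_inner_left, RingHom.id_apply, starRingEnd_self_apply]
      rw [inner_sub_left, inner_sub_right, inner_smul_left, inner_smul_right,
        LinearMap.adjoint_inner_left, starRingEnd_self_apply]
    have hgg' : g * g' = g' * g := by
      simp only [hg, hg', mul_sub, sub_mul, smul_mul_assoc, mul_smul_comm, one_mul, mul_one,
        smul_sub, smul_smul, hcomm]
      rw [mul_comm μ ((starRingEnd ℂ) μ)]
      abel
    -- ⟪g y, g y⟫ = ⟪g' y, g' y⟫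
    have hnorm : ∀ y : V, (inner ℂ (g y) (g y) : ℂ) = inner ℂ (g' y) (g' y) := by
      intro y
      calc (inner ℂ (g y) (g y) : ℂ) = inner ℂ y (g' (g y)) := hadj y (g y)
        _ = inner ℂ y (g (g' y)) := by
            rw [show g' (g y) = g (g' y) by
              have h := DFunLike.congr_fun hgg' y
              simpa [Module.End.mul_apply] using h.symm]
        _ = inner ℂ (g' y) (g' y) := hadj' y (g' y)
    have h0 : g' (g x) = 0 := by
      have : (inner ℂ (g' (g x)) (g' (g x)) : ℂ) = 0 := by
        rw [← hnorm (g x)]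
        have : g (g x) = 0 := hx
        rw [this, inner_zero_right]
      exact inner_self_eq_zero.mp this
    have : (inner ℂ (g x) (g x) : ℂ) = 0 := by
      rw [hadj x (g x), h0, inner_zero_right]
    exact inner_self_eq_zero.mp this
  -- generalized eigenspaces are eigenspaces
  have hpow : ∀ (μ : ℂ) (k : ℕ) (x : V),
      ((f - μ • 1) ^ (k + 1)) x = 0 → (f - μ • 1) x = 0 := by
    intro μ k
    induction k with
    | zero => intro x hx; rwa [pow_one] at hx
    | succ k ih =>
        intro x hx
        have : ((f - μ • 1) ^ (k + 1)) ((f - μ • 1) x) = 0 := by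
          rw [← Module.End.mul_apply, ← pow_succ]
          exact hx
        exact key μ x (ih _ this)
  have hle : ∀ μ : ℂ, f.maxGenEigenspace μ ≤ f.eigenspace μ := by
    intro μ x hx
    obtain ⟨k, hk⟩ := (Module.End.mem_maxGenEigenspace f μ x).mp hx
    rw [Module.End.mem_eigenspace_iff]
    rcases k with _ | k
    · rw [pow_zero, Module.End.one_apply] at hk
      rw [hk]; simp
    · have := hpow μ k x hk
      rw [LinearMap.sub_apply, LinearMap.smul_apply, Module.End.one_apply, sub_eq_zero] at this
      exact this
  have hsup : ⨆ μ : ℂ, f.eigenspace μ = ⊤ := by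
    refine le_antisymm le_top ?_
    rw [← Module.End.iSup_maxGenEigenspace_eq_top f]
    exact iSup_mono hle
  have hindep := Module.End.eigenspaces_iSupIndep f
  have hint : DirectSum.IsInternal (fun μ : ℂ => f.eigenspace μ) :=
    (DirectSum.isInternal_submodule_iff_iSupIndep_and_iSup_eq_top _).mpr ⟨hindep, hsup⟩
  let w : ∀ μ : ℂ, Basis (Module.Free.ChooseBasisIndex ℂ (f.eigenspace μ)) ℂ (f.eigenspace μ) :=
    fun μ => Module.Free.chooseBasis ℂ (f.eigenspace μ)
  let b : Basis (Σ μ : ℂ, Module.Free.ChooseBasisIndex ℂ (f.eigenspace μ)) ℂ V :=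
    hint.collectedBasis w
  haveI : Fintype (Σ μ : ℂ, Module.Free.ChooseBasisIndex ℂ (f.eigenspace μ)) :=
    FiniteDimensional.fintypeBasisIndex b
  have hcard : Fintype.card (Σ μ : ℂ, Module.Free.ChooseBasisIndex ℂ (f.eigenspace μ)) = n := by
    rw [← Module.finrank_eq_card_basis b]
    exact finrank_euclideanSpace_fin
  let e := Fintype.equivFinOfCardEq hcard
  let b' : Basis (Fin n) ℂ V := b.reindex e
  let d : Fin n → ℂ := fun i => (e.symm i).1
  have hbev : ∀ i : Fin n, f (b' i) = d i • b' i := by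
    intro i
    have hmem : b' i ∈ f.eigenspace (e.symm i).1 := by
      rw [Module.Basis.reindex_apply]
      exact hint.collectedBasis_mem w (e.symm i)
    exact Module.End.mem_eigenspace_iff.mp hmem
  have hdiag : LinearMap.toMatrix b' b' f = Matrix.diagonal d := by
    refine Matrix.ext fun i j => ?_
    rw [LinearMap.toMatrix_apply, hbev j, _root_.map_smul, Basis.repr_self,
      Finsupp.smul_apply, Finsupp.single_apply]
    rcases eq_or_ne i j with h | h
    · subst h; simp
    · simp [Matrix.diagonal_apply_ne _ h, Ne.symm h]
  refine ⟨bF.toMatrix b', b'.toMatrix bF, d,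
    Basis.toMatrix_mul_toMatrix_flip _ _, Basis.toMatrix_mul_toMatrix_flip _ _, ?_⟩
  have hH : LinearMap.toMatrix bF bF f = H := by
    rw [show f = Matrix.toLin bF bF H from htoLin H, LinearMap.toMatrix_toLin]
  rw [← hdiag, basis_toMatrix_mul_linearMap_toMatrix_mul_basis_toMatrix, hH]

open Matrix Kronecker Polynomial in
/-- If all eigenvalues of a Kronecker product `H = H₁ ⊗ H₂` of unitary matrices, except
exactly one simple eigenvalue `λ₀`, lie in `{1, a}` with `a ≠ ±1`, and `λ₀ ≠ a²`, and
moreover `λ₀ ≠ 1/a` or the eigenvalue `1` has multiplicity `> n/2` (where `n = n₁n₂`),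
then the Kronecker product is trivial: `n₁ = 1` or `n₂ = 1`. -/
theorem stmt4 (n₁ n₂ : ℕ)
    (H₁ : Matrix (Fin n₁) (Fin n₁) ℂ) (H₂ : Matrix (Fin n₂) (Fin n₂) ℂ)
    (hU₁ : H₁ ∈ Matrix.unitaryGroup (Fin n₁) ℂ) (hU₂ : H₂ ∈ Matrix.unitaryGroup (Fin n₂) ℂ)
    (a lam₀ : ℂ) (ha1 : a ≠ 1) (ha2 : a ≠ -1)
    (E' : Multiset ℂ)
    (hE : (Matrix.kroneckerMap (· * ·) H₁ H₂).charpoly.roots = lam₀ ::ₘ E')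
    (hE' : ∀ x ∈ E', x = 1 ∨ x = a)
    (hlam : lam₀ ≠ 1 ∧ lam₀ ≠ a)
    (h1 : lam₀ ≠ a ^ 2)
    (h2 : lam₀ ≠ 1 / a ∨
      (n₁ * n₂ : ℚ) / 2 <
        (Multiset.count 1 (Matrix.kroneckerMap (· * ·) H₁ H₂).charpoly.roots : ℚ)) :
    n₁ = 1 ∨ n₂ = 1 := by
  classical
  obtain ⟨P₁, Q₁, d, h11, h12, h13⟩ := my_unitary_diag n₁ H₁ hU₁
  obtain ⟨P₂, Q₂, e, h21, h22, h23⟩ := my_unitary_diag n₂ H₂ hU₂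
  set f : Fin n₁ × Fin n₂ → ℂ := fun p => d p.1 * e p.2 with hf
  have hkron : Matrix.kroneckerMap (· * ·) H₁ H₂
      = (P₁ ⊗ₖ P₂) * Matrix.diagonal f * (Q₁ ⊗ₖ Q₂) := by
    show H₁ ⊗ₖ H₂ = _
    rw [h13, h23, Matrix.mul_kronecker_mul, Matrix.mul_kronecker_mul,
      Matrix.diagonal_kronecker_diagonal]
  have hPQ : (P₁ ⊗ₖ P₂) * (Q₁ ⊗ₖ Q₂) = 1 := by
    rw [← Matrix.mul_kronecker_mul, h11, h21, Matrix.one_kronecker_one]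
  have hQP : (Q₁ ⊗ₖ Q₂) * (P₁ ⊗ₖ P₂) = 1 := by
    rw [← Matrix.mul_kronecker_mul, h12, h22, Matrix.one_kronecker_one]
  have hroots : (Matrix.kroneckerMap (· * ·) H₁ H₂).charpoly.roots
      = Finset.univ.val.map f := by
    rw [hkron, my_charpoly_conj _ _ _ hPQ hQP, my_roots_charpoly_diagonal]
  set S : Multiset ℂ := Finset.univ.val.map f with hSdef
  have hS : S = lam₀ ::ₘ E' := by rw [← hroots, hE]
  -- every product is lam₀, 1, or a
  have hmem : ∀ p : Fin n₁ × Fin n₂, f p = lam₀ ∨ f p = 1 ∨ f p = a := by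
    intro p
    have : f p ∈ S := Multiset.mem_map.mpr ⟨p, Finset.mem_univ p, rfl⟩
    rw [hS, Multiset.mem_cons] at this
    rcases this with h | h
    · exact Or.inl h
    · exact Or.inr (hE' _ h)
  -- no root is zero
  have hno0 : ∀ x ∈ S, x ≠ 0 := by
    have hlinv : (star H₁ ⊗ₖ star H₂) * (H₁ ⊗ₖ H₂) = 1 := by
      rw [← Matrix.mul_kronecker_mul]
      rw [show star H₁ * H₁ = 1 from Matrix.mem_unitaryGroup_iff'.mp hU₁,
        show star H₂ * H₂ = 1 from Matrix.mem_unitaryGroup_iff'.mp hU₂,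
        Matrix.one_kronecker_one]
    have hdet : (Matrix.kroneckerMap (· * ·) H₁ H₂).det ≠ 0 :=
      Matrix.det_ne_zero_of_left_inverse hlinv
    have hprod : S.prod = (Matrix.kroneckerMap (· * ·) H₁ H₂).det := by
      rw [Matrix.det_eq_prod_roots_charpoly, hroots]
    intro x hx hx0
    exact hdet (by rw [← hprod, Multiset.prod_eq_zero (hx0 ▸ hx)])
  -- exactly one pair gives lam₀
  have hcount1 : Multiset.count lam₀ S = 1 := by
    rw [hS, Multiset.count_cons_self]
    have : lam₀ ∉ E' := by
      intro h
      rcases hE' _ h with h' | h'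
      · exact hlam.1 h'
      · exact hlam.2 h'
    rw [Multiset.count_eq_zero_of_notMem this]
  have hcard : (Finset.univ.filter fun p : Fin n₁ × Fin n₂ => lam₀ = f p).card = 1 := by
    have := Multiset.count_map f Finset.univ.val lam₀
    rw [← hSdef, hcount1] at this
    exact this.symm
  obtain ⟨p₀, hp₀⟩ := Finset.card_eq_one.mp hcard
  have huniq : ∀ p : Fin n₁ × Fin n₂, f p = lam₀ ↔ p = p₀ := by
    intro p
    constructor
    · intro h
      have : p ∈ Finset.univ.filter fun p : Fin n₁ × Fin n₂ => lam₀ = f p := by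
        simp [h.symm]
      rw [hp₀, Finset.mem_singleton] at this
      exact this
    · intro h
      have : p₀ ∈ ({p₀} : Finset (Fin n₁ × Fin n₂)) := Finset.mem_singleton_self p₀
      rw [← hp₀, Finset.mem_filter] at this
      rw [h, ← this.2]
  have hfp₀ : f p₀ = lam₀ := (huniq p₀).mpr rfl
  -- nondegeneracy
  rcases Nat.eq_zero_or_pos n₁ with hn₁0 | hn₁pos
  · exfalso
    have : S = 0 := by
      subst hn₁0
      simp [hSdef]
    rw [hS] at this
    exact Multiset.cons_ne_zero this
  rcases Nat.eq_zero_or_pos n₂ with hn₂0 | hn₂pos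
  · exfalso
    have : S = 0 := by
      subst hn₂0
      simp [hSdef]
    rw [hS] at this
    exact Multiset.cons_ne_zero this
  by_contra hcon
  push_neg at hcon
  have hn₁ : 2 ≤ n₁ := by omega
  have hn₂ : 2 ≤ n₂ := by omega
  -- the key pointwise analysis
  have key : ∀ i, i ≠ p₀.1 → ∀ j, j ≠ p₀.2 → d i * e j = a ∧ lam₀ * a = 1 := by
    intro i hi j hj
    have hne : ∀ (i' : Fin n₁) (j' : Fin n₂), (i', j') ≠ p₀ → d i' * e j' = 1 ∨ d i' * e j' = a := by
      intro i' j' hne'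
      rcases hmem (i', j') with h | h
      · exact absurd ((huniq (i', j')).mp h) hne'
      · exact h
    have hq := hne p₀.1 j (by intro h; exact hj (congrArg Prod.snd h))
    have hr := hne i p₀.2 (by intro h; exact hi (congrArg Prod.fst h))
    have hu := hne i j (by intro h; exact hj (congrArg Prod.snd h))
    have hiden : (d p₀.1 * e j) * (d i * e p₀.2) = lam₀ * (d i * e j) := by
      rw [← hfp₀]; show _ = (d p₀.1 * e p₀.2) * _; ring
    have hainS : d i * e j = a → a ≠ 0 := by
      intro h
      have : (a : ℂ) ∈ S := Multiset.mem_map.mpr ⟨(i, j), Finset.mem_univ _, h⟩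
      exact hno0 a this
    rcases hq with hq | hq <;> rcases hr with hr | hr <;> rcases hu with hu | hu <;>
      rw [hq, hr, hu] at hiden
    · exact absurd (by linear_combination -hiden) hlam.1
    · exact ⟨hu, by linear_combination -hiden⟩
    · exact absurd (by linear_combination -hiden) hlam.2
    · exfalso
      have ha0 := hainS hu
      have : a * (lam₀ - 1) = 0 := by linear_combination -hiden
      rcases mul_eq_zero.mp this with h | h
      · exact ha0 h
      · exact hlam.1 (by linear_combination h)
    · exact absurd (by linear_combination -hiden) hlam.2
    · exfalso
      have ha0 := hainS hu
      have : a * (lam₀ - 1) = 0 := by linear_combination -hiden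
      rcases mul_eq_zero.mp this with h | h
      · exact ha0 h
      · exact hlam.1 (by linear_combination h)
    · exact absurd (by linear_combination (a^2 : ℂ) * 1 - hiden) h1
    · exfalso
      have ha0 := hainS hu
      have : a * (lam₀ - a) = 0 := by linear_combination -hiden
      rcases mul_eq_zero.mp this with h | h
      · exact ha0 h
      · exact hlam.2 (by linear_combination h)
  obtain ⟨i₁, hi₁⟩ := Fintype.exists_ne_of_one_lt_card (by rw [Fintype.card_fin]; omega) p₀.1
  obtain ⟨j₁, hj₁⟩ := Fintype.exists_ne_of_one_lt_card (by rw [Fintype.card_fin]; omega) p₀.2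
  have hla : lam₀ * a = 1 := (key i₁ hi₁ j₁ hj₁).2
  have ha0 : a ≠ 0 := by
    intro h
    rw [h, mul_zero] at hla
    exact zero_ne_one hla
  rcases h2 with h2 | h2
  · exact h2 (by field_simp; linear_combination hla)
  · -- counting
    rw [hroots] at h2
    have hcnt : Multiset.count 1 S
        = (Finset.univ.filter fun p : Fin n₁ × Fin n₂ => (1 : ℂ) = f p).card := by
      rw [hSdef, Multiset.count_map]
      rfl
    set F := Finset.univ.filter fun p : Fin n₁ × Fin n₂ => (1 : ℂ) = f p with hF
    set A := Finset.univ.filter fun p : Fin n₁ × Fin n₂ => p.1 = p₀.1 ∧ p.2 ≠ p₀.2 with hA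
    set B := Finset.univ.filter fun p : Fin n₁ × Fin n₂ => p.1 ≠ p₀.1 ∧ p.2 = p₀.2 with hB
    have hsub : F ⊆ A ∪ B := by
      intro p hp
      rw [hF, Finset.mem_filter] at hp
      have hp1 : f p = 1 := hp.2.symm
      rcases eq_or_ne p.1 p₀.1 with e1 | e1 <;> rcases eq_or_ne p.2 p₀.2 with e2 | e2
      · exfalso
        have : p = p₀ := Prod.ext e1 e2
        rw [this, hfp₀] at hp1
        exact hlam.1 hp1
      · exact Finset.mem_union_left _ (by rw [hA, Finset.mem_filter]; exact ⟨Finset.mem_univ _, e1, e2⟩)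
      · exact Finset.mem_union_right _ (by rw [hB, Finset.mem_filter]; exact ⟨Finset.mem_univ _, e1, e2⟩)
      · exfalso
        have hp2 : d p.1 * e p.2 = 1 := hp1
        rw [(key p.1 e1 p.2 e2).1] at hp2
        exact ha1 hp2
    have hcardA : A.card ≤ n₂ - 1 := by
      have : A.card ≤ (Finset.univ.erase p₀.2).card := by
        apply Finset.card_le_card_of_injOn (fun p => p.2)
        · intro p hp
          rw [hA, Finset.mem_coe, Finset.mem_filter] at hp
          exact Finset.mem_erase.mpr ⟨hp.2.2, Finset.mem_univ _⟩
        · intro p hp q hq hpq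
          have hp' := Finset.mem_filter.mp (Finset.mem_coe.mp hp)
          have hq' := Finset.mem_filter.mp (Finset.mem_coe.mp hq)
          exact Prod.ext (hp'.2.1.trans hq'.2.1.symm) hpq
      simpa [Finset.card_erase_of_mem] using this
    have hcardB : B.card ≤ n₁ - 1 := by
      have : B.card ≤ (Finset.univ.erase p₀.1).card := by
        apply Finset.card_le_card_of_injOn (fun p => p.1)
        · intro p hp
          rw [hB, Finset.mem_coe, Finset.mem_filter] at hp
          exact Finset.mem_erase.mpr ⟨hp.2.1, Finset.mem_univ _⟩
        · intro p hp q hq hpq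
          have hp' := Finset.mem_filter.mp (Finset.mem_coe.mp hp)
          have hq' := Finset.mem_filter.mp (Finset.mem_coe.mp hq)
          exact Prod.ext hpq (hp'.2.2.trans hq'.2.2.symm)
      simpa [Finset.card_erase_of_mem] using this
    have hFcard : F.card + 2 ≤ n₁ + n₂ := by
      have := (Finset.card_le_card hsub).trans (Finset.card_union_le A B)
      omega
    have hle : (Multiset.count 1 S : ℚ) ≤ (n₁ : ℚ) + n₂ - 2 := by
      rw [hcnt]
      have : (F.card : ℚ) + 2 ≤ (n₁ : ℚ) + n₂ := by exact_mod_cast hFcard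
      linarith
    have hineq : (n₁ : ℚ) + n₂ - 2 ≤ (n₁ * n₂ : ℚ) / 2 := by
      have h₁ : (2 : ℚ) ≤ n₁ := by exact_mod_cast hn₁
      have h₂ : (2 : ℚ) ≤ n₂ := by exact_mod_cast hn₂
      nlinarith
    have := h2.trans_le (hle.trans hineq)
    push_cast at this
    linarith
end

section
/- There is no complex diagonalizable matrix A of size (n-1)×(n-1), with n ≥ 4, whose symmetric square Sym²A has eigenvalue multiset consisting of one eigenvalue equal to s with s ≠ 1, and all remaining n(n-1)/2 − 1 eigenvalues equal to 1. -/
open Polynomial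

/-- Index set for the standard basis `eᵢ ⊙ eⱼ` (`i ≤ j`) of the symmetric square. -/
def SymIdx (n : ℕ) := {p : Fin n × Fin n // p.1 ≤ p.2}

instance (n : ℕ) : Fintype (SymIdx n) := Subtype.fintype _
instance (n : ℕ) : DecidableEq (SymIdx n) := Subtype.instDecidableEq

/-- The matrix of the induced endomorphism `Sym² A` on the symmetric square, in the basis
`eᵢ ⊙ eⱼ` (`i ≤ j`). -/
def symSq (n : ℕ) (A : Matrix (Fin n) (Fin n) ℂ) : Matrix (SymIdx n) (SymIdx n) ℂ :=
  fun r c =>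
    if r.1.1 = r.1.2 then A r.1.1 c.1.1 * A r.1.1 c.1.2
    else A r.1.1 c.1.1 * A r.1.2 c.1.2 + A r.1.2 c.1.1 * A r.1.1 c.1.2

section SymSqAux

set_option linter.unreachableTactic false
set_option linter.unnecessarySeqFocus false
set_option linter.unusedTactic false

variable {n : ℕ}

lemma sum_symIdx (G : Fin n × Fin n → ℂ) :
    ∑ q : SymIdx n, G q.1 =
      ∑ p ∈ Finset.univ.filter (fun p : Fin n × Fin n => p.1 ≤ p.2), G p :=
  (Finset.sum_subtype (p := fun p : Fin n × Fin n => p.1 ≤ p.2)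
    (Finset.univ.filter (fun p : Fin n × Fin n => p.1 ≤ p.2)) (fun p => by simp) G).symm

lemma sum_pairs (h : Fin n → Fin n → ℂ) :
    ∑ a : Fin n, ∑ b : Fin n, h a b =
      ∑ p ∈ Finset.univ.filter (fun p : Fin n × Fin n => p.1 ≤ p.2),
        (if p.1 = p.2 then h p.1 p.1 else h p.1 p.2 + h p.2 p.1) := by
  classical
  have hswap : ∑ p ∈ Finset.univ.filter (fun p : Fin n × Fin n => ¬ p.1 ≤ p.2), h p.1 p.2
      = ∑ p ∈ Finset.univ.filter (fun p : Fin n × Fin n => p.1 < p.2), h p.2 p.1 := by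
    apply Finset.sum_nbij' (fun p => p.swap) (fun p => p.swap)
    · intro p hp; simp only [Finset.mem_filter, Finset.mem_univ, true_and, not_le] at hp ⊢
      exact hp
    · intro p hp; simp only [Finset.mem_filter, Finset.mem_univ, true_and, not_le] at hp ⊢
      exact hp
    · intro p _; rfl
    · intro p _; rfl
    · intro p _; rfl
  have hrhs : ∑ p ∈ Finset.univ.filter (fun p : Fin n × Fin n => p.1 ≤ p.2),
        (if p.1 = p.2 then h p.1 p.1 else h p.1 p.2 + h p.2 p.1)
      = ∑ p ∈ Finset.univ.filter (fun p : Fin n × Fin n => p.1 ≤ p.2),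
          (h p.1 p.2 + if p.1 ≠ p.2 then h p.2 p.1 else 0) := by
    apply Finset.sum_congr rfl
    intro p _
    by_cases hp : p.1 = p.2
    · simp [hp]
    · simp [hp]
  rw [hrhs, Finset.sum_add_distrib, ← Finset.sum_filter, Finset.filter_filter]
  have hfe : (Finset.univ.filter (fun p : Fin n × Fin n => p.1 ≤ p.2 ∧ p.1 ≠ p.2))
      = Finset.univ.filter (fun p : Fin n × Fin n => p.1 < p.2) := by
    apply Finset.filter_congr
    intro p _
    simp [lt_iff_le_and_ne]
  rw [hfe, ← hswap, ← Finset.sum_product', Finset.univ_product_univ,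
    ← Finset.sum_filter_add_sum_filter_not (Finset.univ : Finset (Fin n × Fin n))
      (fun p => p.1 ≤ p.2) (fun p => h p.1 p.2)]

lemma symSq_mul (A B : Matrix (Fin n) (Fin n) ℂ) :
    symSq n (A * B) = symSq n A * symSq n B := by
  ext r c
  rw [Matrix.mul_apply]
  have h1 : (∑ q : SymIdx n, symSq n A r q * symSq n B q c) =
      ∑ p ∈ Finset.univ.filter (fun p : Fin n × Fin n => p.1 ≤ p.2),
        ((if r.1.1 = r.1.2 then A r.1.1 p.1 * A r.1.1 p.2
          else A r.1.1 p.1 * A r.1.2 p.2 + A r.1.2 p.1 * A r.1.1 p.2) *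
        (if p.1 = p.2 then B p.1 c.1.1 * B p.1 c.1.2
          else B p.1 c.1.1 * B p.2 c.1.2 + B p.2 c.1.1 * B p.1 c.1.2)) :=
    sum_symIdx (fun p =>
        ((if r.1.1 = r.1.2 then A r.1.1 p.1 * A r.1.1 p.2
          else A r.1.1 p.1 * A r.1.2 p.2 + A r.1.2 p.1 * A r.1.1 p.2) *
        (if p.1 = p.2 then B p.1 c.1.1 * B p.1 c.1.2
          else B p.1 c.1.1 * B p.2 c.1.2 + B p.2 c.1.1 * B p.1 c.1.2)))
  rw [h1]
  by_cases hr : r.1.1 = r.1.2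
  · simp only [symSq, if_pos hr, Matrix.mul_apply]
    calc (∑ a, A r.1.1 a * B a c.1.1) * (∑ b, A r.1.1 b * B b c.1.2)
        = ∑ a, ∑ b, (A r.1.1 a * A r.1.1 b) * (B a c.1.1 * B b c.1.2) := by
          rw [Finset.sum_mul_sum]
          exact Finset.sum_congr rfl fun a _ => Finset.sum_congr rfl fun b _ => by ring
      _ = _ := sum_pairs (fun a b => (A r.1.1 a * A r.1.1 b) * (B a c.1.1 * B b c.1.2))
      _ = _ := Finset.sum_congr rfl fun p hp => by
          split_ifs with h
          · rw [← h]
          · ring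
  · simp only [symSq, if_neg hr, Matrix.mul_apply]
    calc (∑ a, A r.1.1 a * B a c.1.1) * (∑ b, A r.1.2 b * B b c.1.2)
          + (∑ a, A r.1.2 a * B a c.1.1) * (∑ b, A r.1.1 b * B b c.1.2)
        = ∑ a, ∑ b, (A r.1.1 a * A r.1.2 b + A r.1.2 a * A r.1.1 b) * (B a c.1.1 * B b c.1.2) := by
          rw [Finset.sum_mul_sum, Finset.sum_mul_sum, ← Finset.sum_add_distrib]
          refine Finset.sum_congr rfl fun a _ => ?_
          rw [← Finset.sum_add_distrib]
          exact Finset.sum_congr rfl fun b _ => by ring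
      _ = _ := sum_pairs (fun a b => (A r.1.1 a * A r.1.2 b + A r.1.2 a * A r.1.1 b) * (B a c.1.1 * B b c.1.2))
      _ = _ := Finset.sum_congr rfl fun p hp => by
          split_ifs with h
          · rw [← h]
          · ring

lemma symIdx_eq_iff {n : ℕ} (a b : SymIdx n) :
    a = b ↔ a.1.1 = b.1.1 ∧ a.1.2 = b.1.2 := by
  constructor
  · rintro rfl; exact ⟨rfl, rfl⟩
  · rintro ⟨h1, h2⟩
    exact Subtype.ext (Prod.ext h1 h2)

lemma symSq_one : symSq n 1 = 1 := by
  ext r c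
  rw [Matrix.one_apply]
  by_cases hrc : r = c
  · subst hrc
    rw [if_pos rfl]
    obtain ⟨⟨r1, r2⟩, hr⟩ := r
    simp only [symSq, Matrix.one_apply]
    split_ifs <;> simp_all
  · rw [if_neg hrc]
    have hne := mt (symIdx_eq_iff r c).2 hrc
    obtain ⟨⟨r1, r2⟩, hr⟩ := r
    obtain ⟨⟨c1, c2⟩, hc⟩ := c
    change r1 ≤ r2 at hr
    change c1 ≤ c2 at hc
    simp only [symSq, Matrix.one_apply]
    simp only at hne
    split_ifs <;> simp_all <;> omega

lemma symSq_diagonal (d : Fin n → ℂ) :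
    symSq n (Matrix.diagonal d) =
      Matrix.diagonal (fun q : SymIdx n => d q.1.1 * d q.1.2) := by
  ext r c
  rw [Matrix.diagonal_apply]
  by_cases hrc : r = c
  · subst hrc
    rw [if_pos rfl]
    obtain ⟨⟨r1, r2⟩, hr⟩ := r
    simp only [symSq, Matrix.diagonal_apply]
    split_ifs <;> simp_all
  · rw [if_neg hrc]
    have hne := mt (symIdx_eq_iff r c).2 hrc
    obtain ⟨⟨r1, r2⟩, hr⟩ := r
    obtain ⟨⟨c1, c2⟩, hc⟩ := c
    change r1 ≤ r2 at hr
    change c1 ≤ c2 at hc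
    simp only [symSq, Matrix.diagonal_apply]
    simp only at hne
    split_ifs <;> simp_all <;> omega

lemma charpoly_conj' {m : Type*} [Fintype m] [DecidableEq m]
    (u v M : Matrix m m ℂ) (huv : u * v = 1) (M' : Matrix m m ℂ) (hM : M' = u * M * v) :
    M'.charpoly = M.charpoly := by
  subst hM
  set f := (RingHom.mapMatrix (C : ℂ →+* ℂ[X]) : Matrix m m ℂ →+* Matrix m m ℂ[X]) with hf
  have hu : f u * f v = 1 := by rw [← map_mul, huv, map_one]
  have h : Matrix.charmatrix (u * M * v) = f u * Matrix.charmatrix M * f v := by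
    unfold Matrix.charmatrix
    rw [mul_sub, sub_mul]
    congr 1
    · have hcomm := (Matrix.scalar_commute (n := m) (X : ℂ[X])
        (fun r' => Commute.all X r') (f v)).eq
      rw [mul_assoc, hcomm, ← mul_assoc, hu, one_mul]
    · show f (u * M * v) = _
      rw [map_mul, map_mul]
  have hdet : (f u).det * (f v).det = 1 := by rw [← Matrix.det_mul, hu, Matrix.det_one]
  unfold Matrix.charpoly
  rw [h, Matrix.det_mul, Matrix.det_mul]
  linear_combination M.charmatrix.det * hdet

lemma roots_charpoly_diag {m : Type*} [Fintype m] [DecidableEq m] (e : m → ℂ) :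
    (Matrix.diagonal e).charpoly.roots = Finset.univ.val.map e := by
  have h1 : (Matrix.diagonal e).charmatrix = Matrix.diagonal (fun i => X - C (e i)) := by
    ext i j
    by_cases h : i = j
    · subst h; simp
    · rw [Matrix.charmatrix_apply_ne _ _ _ h, Matrix.diagonal_apply_ne _ h,
        Matrix.diagonal_apply_ne _ h, map_zero, neg_zero]
  unfold Matrix.charpoly
  rw [h1, Matrix.det_diagonal]
  have h2 : (∏ i : m, (X - C (e i))) = ((Finset.univ.val.map e).map (fun a => X - C a)).prod := by
    rw [Multiset.map_map]
    rfl
  rw [h2, Polynomial.roots_multiset_prod_X_sub_C]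

end SymSqAux

/-- For `n ≥ 4`, no diagonalizable `(n-1) × (n-1)` complex matrix `A` has a symmetric
square whose eigenvalue multiset consists of one eigenvalue `s ≠ 1` and all remaining
`n(n-1)/2 - 1` eigenvalues equal to `1`. -/
theorem stmt5 (n : ℕ) (hn : 4 ≤ n) (A : Matrix (Fin (n - 1)) (Fin (n - 1)) ℂ)
    (hdiag : ∃ P : (Matrix (Fin (n - 1)) (Fin (n - 1)) ℂ)ˣ, ∃ d : Fin (n - 1) → ℂ,
      (↑P⁻¹ : Matrix (Fin (n - 1)) (Fin (n - 1)) ℂ) * A * (↑P : Matrix (Fin (n - 1)) (Fin (n - 1)) ℂ)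
        = Matrix.diagonal d)
    (s : ℂ) (hs : s ≠ 1) :
    ¬ (symSq (n - 1) A).charpoly.roots = s ::ₘ Multiset.replicate (n * (n - 1) / 2 - 1) 1 := by
  classical
  intro hroots
  obtain ⟨P, d, hd⟩ := hdiag
  set Pm := (↑P : Matrix (Fin (n - 1)) (Fin (n - 1)) ℂ) with hPm
  set Pi := (↑P⁻¹ : Matrix (Fin (n - 1)) (Fin (n - 1)) ℂ) with hPi
  have e1 : Pm * Pi = 1 := P.mul_inv
  have hA : A = Pm * Matrix.diagonal d * Pi := by
    rw [← hd]
    calc A = (Pm * Pi) * A * (Pm * Pi) := by rw [e1, one_mul, mul_one]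
      _ = _ := by simp only [mul_assoc]
  have hone : symSq (n - 1) Pm * symSq (n - 1) Pi = 1 := by
    rw [← symSq_mul, e1, symSq_one]
  have hsym : symSq (n - 1) A
      = symSq (n - 1) Pm * symSq (n - 1) (Matrix.diagonal d) * symSq (n - 1) Pi := by
    rw [hA, symSq_mul, symSq_mul]
  have hcp : (symSq (n - 1) A).charpoly
      = (symSq (n - 1) (Matrix.diagonal d)).charpoly :=
    charpoly_conj' _ _ _ hone _ hsym
  rw [symSq_diagonal] at hcp
  set F : SymIdx (n - 1) → ℂ := fun q => d q.1.1 * d q.1.2 with hF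
  have hroots2 : Finset.univ.val.map F
      = s ::ₘ Multiset.replicate (n * (n - 1) / 2 - 1) 1 := by
    rw [← roots_charpoly_diag, ← hcp, hroots]
  have hfilter : Multiset.filter (fun x => x ≠ 1) (Finset.univ.val.map F) = {s} := by
    rw [hroots2, Multiset.filter_cons_of_pos (p := fun x => x ≠ 1) _ hs]
    rw [Multiset.filter_eq_nil.2 (fun a ha => by
      rw [Multiset.eq_of_mem_replicate ha]; simp)]
    rfl
  rw [Multiset.filter_map] at hfilter
  have hcard : Multiset.card (Multiset.filter ((fun x => x ≠ 1) ∘ F) Finset.univ.val) = 1 := by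
    have := congrArg Multiset.card hfilter
    simpa using this
  obtain ⟨r₀, hr₀⟩ := Multiset.card_eq_one.mp hcard
  have hFr₀ : F r₀ = s := by
    rw [hr₀] at hfilter
    simpa using hfilter
  have hothers : ∀ q : SymIdx (n - 1), q ≠ r₀ → F q = 1 := by
    intro q hq
    by_contra hne
    have hqmem : q ∈ Multiset.filter ((fun x => x ≠ 1) ∘ F) Finset.univ.val :=
      Multiset.mem_filter.2 ⟨by simp, hne⟩
    rw [hr₀, Multiset.mem_singleton] at hqmem
    exact hq hqmem
  have hkl : r₀.1.1 ≤ r₀.1.2 := r₀.2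
  have key : ∀ a b : Fin (n - 1), ¬(a = r₀.1.1 ∧ b = r₀.1.2) →
      ¬(a = r₀.1.2 ∧ b = r₀.1.1) → d a * d b = 1 := by
    intro a b h1 h2
    rcases le_total a b with hab | hab
    · refine hothers ⟨(a, b), hab⟩ (fun he => ?_)
      replace he := (symIdx_eq_iff _ _).1 he
      exact h1 he
    · have := hothers ⟨(b, a), hab⟩ (fun he => ?_)
      · rw [← this]; exact mul_comm _ _
      · replace he := (symIdx_eq_iff _ _).1 he
        exact h2 ⟨he.2, he.1⟩
  have hex : ∃ i : Fin (n - 1), i ≠ r₀.1.1 ∧ i ≠ r₀.1.2 := by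
    by_contra hcon
    push_neg at hcon
    have hsub : (Finset.univ : Finset (Fin (n - 1))) ⊆ {r₀.1.1, r₀.1.2} := by
      intro i _
      rcases eq_or_ne i r₀.1.1 with h | h
      · simp [h]
      · simp [hcon i h]
    have hle := Finset.card_le_card hsub
    have h2 : ({r₀.1.1, r₀.1.2} : Finset (Fin (n - 1))).card ≤ 2 :=
      (Finset.card_insert_le _ _).trans (by simp)
    rw [Finset.card_univ, Fintype.card_fin] at hle
    omega
  obtain ⟨i, hik, hil⟩ := hex
  have k1 : d i * d i = 1 := key i i (fun h => hik h.1) (fun h => hil h.1)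
  have k2 : d i * d (r₀.1.1) = 1 := key i r₀.1.1 (fun h => hik h.1) (fun h => hil h.1)
  have k3 : d i * d (r₀.1.2) = 1 := key i r₀.1.2 (fun h => hik h.1) (fun h => hil h.1)
  apply hs
  rw [← hFr₀, hF]
  linear_combination (d i * d (r₀.1.2)) * k2 + k3 - d (r₀.1.1) * d (r₀.1.2) * k1
end

section
/- Let A be a diagonalizable matrix such that no quotient of two distinct eigenvalues of A is a root of unity, and let m ≠ 0 be an integer. Then A and A^m have exactly the same invariant subspaces. -/
open Matrix Polynomial

variable {n : ℕ}

/-- Conjugation by an invertible matrix as an algebra homomorphism. -/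
private noncomputable def conjAH (Q R : Matrix (Fin n) (Fin n) ℂ)
    (h1 : Q * R = 1) (h2 : R * Q = 1) :
    Matrix (Fin n) (Fin n) ℂ →ₐ[ℂ] Matrix (Fin n) (Fin n) ℂ where
  toFun X := Q * X * R
  map_one' := by show Q * 1 * R = 1; rw [mul_one, h1]
  map_mul' X Y := by
    show Q * (X * Y) * R = (Q * X * R) * (Q * Y * R)
    simp only [mul_assoc]
    rw [← mul_assoc R Q, h2, one_mul]
  map_zero' := by simp
  map_add' X Y := by simp [mul_add, add_mul]
  commutes' c := by
    simp [Algebra.algebraMap_eq_smul_one, mul_smul_comm, smul_mul_assoc, h1]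

private lemma aeval_conj_diag (Q R : Matrix (Fin n) (Fin n) ℂ)
    (h1 : Q * R = 1) (h2 : R * Q = 1) (e : Fin n → ℂ) (p : ℂ[X]) :
    aeval (Q * diagonal e * R) p = Q * diagonal (fun i => p.eval (e i)) * R := by
  have hc : Q * diagonal e * R = conjAH Q R h1 h2 (diagonal e) := rfl
  rw [hc, Polynomial.aeval_algHom_apply]
  have hd : diagonal e = diagonalAlgHom ℂ e := rfl
  rw [hd, Polynomial.aeval_algHom_apply]
  show Q * diagonal (aeval e p) * R = _
  have he : (aeval e p : Fin n → ℂ) = fun i => eval (e i) p := by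
    funext i
    have := Polynomial.aeval_algHom_apply (Pi.evalAlgHom ℂ (fun _ : Fin n => ℂ) i) e p
    simp only [Pi.evalAlgHom_apply] at this
    rw [← this, ← Polynomial.coe_aeval_eq_eval]
  rw [he]

private lemma conj_pow' (Q R D : Matrix (Fin n) (Fin n) ℂ)
    (h1 : Q * R = 1) (h2 : R * Q = 1) (k : ℕ) :
    (Q * D * R) ^ k = Q * D ^ k * R :=
  (map_pow (conjAH Q R h1 h2) D k).symm

private lemma inv_aeval (M : Matrix (Fin n) (Fin n) ℂ) (W : Submodule ℂ (Fin n → ℂ))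
    (hW : ∀ v ∈ W, M.mulVec v ∈ W) (p : ℂ[X]) :
    ∀ v ∈ W, (aeval M p).mulVec v ∈ W := by
  have hpow : ∀ k : ℕ, ∀ v ∈ W, (M ^ k).mulVec v ∈ W := by
    intro k
    induction k with
    | zero => intro v hv; simpa using hv
    | succ k ih =>
      intro v hv
      rw [pow_succ', ← Matrix.mulVec_mulVec]
      exact hW _ (ih v hv)
  induction p using Polynomial.induction_on' with
  | add p q hp hq =>
    intro v hv
    rw [map_add, Matrix.add_mulVec]
    exact W.add_mem (hp v hv) (hq v hv)
  | monomial k c =>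
    intro v hv
    rw [Polynomial.aeval_monomial, Algebra.algebraMap_eq_smul_one, smul_mul_assoc, one_mul,
      Matrix.smul_mulVec]
    exact W.smul_mem _ (hpow k v hv)

/-- If `A` is a diagonalizable invertible complex matrix such that no quotient of two
distinct eigenvalues of `A` is a root of unity, then for every integer `m ≠ 0`, the
matrices `A` and `Aᵐ` have exactly the same invariant subspaces. -/
theorem stmt11 (n : ℕ) (A : (Matrix (Fin n) (Fin n) ℂ)ˣ)
    (hdiag : ∃ P : (Matrix (Fin n) (Fin n) ℂ)ˣ, ∃ d : Fin n → ℂ,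
      (↑P⁻¹ : Matrix (Fin n) (Fin n) ℂ) * (↑A : Matrix (Fin n) (Fin n) ℂ) *
        (↑P : Matrix (Fin n) (Fin n) ℂ) = Matrix.diagonal d)
    (heig : ∀ lam mu : ℂ,
      Module.End.HasEigenvalue (↑A : Matrix (Fin n) (Fin n) ℂ).mulVecLin lam →
      Module.End.HasEigenvalue (↑A : Matrix (Fin n) (Fin n) ℂ).mulVecLin mu →
      lam ≠ mu → ∀ r : ℕ, 0 < r → (lam / mu) ^ r ≠ 1)
    (m : ℤ) (hm : m ≠ 0) :
    ∀ W : Submodule ℂ (Fin n → ℂ),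
      (∀ v ∈ W, (↑A : Matrix (Fin n) (Fin n) ℂ).mulVecLin v ∈ W) ↔
      (∀ v ∈ W, (↑(A ^ m) : Matrix (Fin n) (Fin n) ℂ).mulVecLin v ∈ W) := by
  classical
  obtain ⟨P, d, hPD⟩ := hdiag
  set Q : Matrix (Fin n) (Fin n) ℂ := ↑P with hQdef
  set R : Matrix (Fin n) (Fin n) ℂ := ↑P⁻¹ with hRdef
  have hQR : Q * R = 1 := P.mul_inv
  have hRQ : R * Q = 1 := P.inv_mul
  -- A = Q D R
  have hA : (↑A : Matrix (Fin n) (Fin n) ℂ) = Q * Matrix.diagonal d * R := by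
    have h := congrArg (fun X => Q * X * R) hPD
    rw [← h]
    simp only [← mul_assoc]
    rw [hQR, one_mul, mul_assoc, hQR, mul_one]
  -- entries of d are nonzero
  have hd0 : ∀ i, d i ≠ 0 := by
    have hu : IsUnit (Matrix.diagonal d) := by
      rw [← hPD]
      exact ⟨P⁻¹ * A * P, rfl⟩
    have hdet : IsUnit (Matrix.diagonal d).det := (Matrix.isUnit_iff_isUnit_det _).mp hu
    rw [Matrix.det_diagonal] at hdet
    intro i h0
    exact (isUnit_iff_ne_zero.mp hdet)
      (Finset.prod_eq_zero (Finset.mem_univ i) h0)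
  -- each d i is an eigenvalue of A
  have heigd : ∀ i, Module.End.HasEigenvalue
      (↑A : Matrix (Fin n) (Fin n) ℂ).mulVecLin (d i) := by
    intro i
    have hAQ : (↑A : Matrix (Fin n) (Fin n) ℂ) * Q = Q * Matrix.diagonal d := by
      rw [hA, mul_assoc, hRQ, mul_one]
    set v : Fin n → ℂ := Q.mulVec (Pi.single i 1) with hvdef
    have hsingle : (Matrix.diagonal d).mulVec (Pi.single i (1:ℂ))
        = d i • (Pi.single i 1 : Fin n → ℂ) := by
      rw [Matrix.diagonal_mulVec_single, mul_one]
      funext j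
      by_cases hj : j = i <;> simp [hj, Pi.single_apply]
    have hv1 : (↑A : Matrix (Fin n) (Fin n) ℂ).mulVecLin v = d i • v := by
      rw [Matrix.mulVecLin_apply, hvdef, Matrix.mulVec_mulVec, hAQ,
        ← Matrix.mulVec_mulVec, hsingle, Matrix.mulVec_smul]
    have hv0 : v ≠ 0 := by
      intro hv
      have h0 : Pi.single i (1:ℂ) = R.mulVec v := by
        rw [hvdef, Matrix.mulVec_mulVec, hRQ, Matrix.one_mulVec]
      rw [hv, Matrix.mulVec_zero] at h0
      simpa using congrFun h0 i
    exact Module.End.hasEigenvalue_of_hasEigenvector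
      ⟨Module.End.mem_eigenspace_iff.mpr hv1, hv0⟩
  -- injectivity of x ↦ x ^ m on the eigenvalues
  have h_inj : ∀ i j, d i ^ m = d j ^ m → d i = d j := by
    intro i j hij
    by_contra hne
    have h1 : ((d i / d j) : ℂ) ^ m = 1 := by
      rw [div_zpow, hij, div_self (zpow_ne_zero m (hd0 j))]
    refine heig (d i) (d j) (heigd i) (heigd j) hne m.natAbs (Int.natAbs_pos.mpr hm) ?_
    rcases Int.natAbs_eq m with h | h
    · have h2 : (d i / d j) ^ ((m.natAbs : ℤ)) = 1 := by rw [← h]; exact h1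
      rwa [zpow_natCast] at h2
    · have hnm : ((m.natAbs : ℤ)) = -m := by omega
      have h2 : (d i / d j) ^ ((m.natAbs : ℤ)) = 1 := by
        rw [hnm, _root_.zpow_neg, h1, inv_one]
      rwa [zpow_natCast] at h2
  -- A ^ m = Q diag(d ^ m) R
  have hAm : (↑(A ^ m) : Matrix (Fin n) (Fin n) ℂ)
      = Q * Matrix.diagonal (fun i => d i ^ m) * R := by
    cases m with
    | ofNat k =>
      have hzp : A ^ (Int.ofNat k) = A ^ k := zpow_natCast A k
      rw [hzp, Units.val_pow_eq_pow_val, hA, conj_pow' _ _ _ hQR hRQ, Matrix.diagonal_pow]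
      have hfun : (d ^ k : Fin n → ℂ) = fun i => d i ^ (Int.ofNat k) := by
        funext i
        simp only [Pi.pow_apply]
        exact (zpow_natCast (d i) k).symm
      rw [hfun]
    | negSucc k =>
      have hAinv : (↑(A⁻¹) : Matrix (Fin n) (Fin n) ℂ)
          = Q * Matrix.diagonal (fun i => (d i)⁻¹) * R := by
        have hone : (↑A : Matrix (Fin n) (Fin n) ℂ)
            * (Q * Matrix.diagonal (fun i => (d i)⁻¹) * R) = 1 := by
          rw [hA]
          simp only [mul_assoc]
          rw [← mul_assoc R Q, hRQ, one_mul,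
            ← mul_assoc (Matrix.diagonal d) (Matrix.diagonal _),
            Matrix.diagonal_mul_diagonal,
            show (fun i => d i * (d i)⁻¹) = fun _ : Fin n => (1:ℂ) from
              funext fun i => mul_inv_cancel₀ (hd0 i),
            Matrix.diagonal_one, one_mul, hQR]
        calc (↑(A⁻¹) : Matrix (Fin n) (Fin n) ℂ)
            = ↑(A⁻¹) * ((↑A : Matrix (Fin n) (Fin n) ℂ)
                * (Q * Matrix.diagonal (fun i => (d i)⁻¹) * R)) := by
              rw [hone, mul_one]
          _ = (↑(A⁻¹) * (↑A : Matrix (Fin n) (Fin n) ℂ))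
                * (Q * Matrix.diagonal (fun i => (d i)⁻¹) * R) := by
              rw [← mul_assoc]
          _ = Q * Matrix.diagonal (fun i => (d i)⁻¹) * R := by
              rw [← Units.val_mul, inv_mul_cancel, Units.val_one, one_mul]
      rw [zpow_negSucc, ← inv_pow, Units.val_pow_eq_pow_val, hAinv,
        conj_pow' _ _ _ hQR hRQ, Matrix.diagonal_pow]
      have hfun : ((fun i => (d i)⁻¹) ^ (k + 1) : Fin n → ℂ)
          = fun i => d i ^ (Int.negSucc k) := by
        funext i
        simp only [Pi.pow_apply]
        rw [zpow_negSucc, inv_pow]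
      rw [hfun]
  -- interpolation polynomials
  obtain ⟨p, hp⟩ : ∃ p : Polynomial ℂ, ∀ i, p.eval (d i ^ m) = d i := by
    refine ⟨Lagrange.interpolate (Finset.image (fun i => d i ^ m) Finset.univ) id
      (fun x => if h : ∃ i : Fin n, d i ^ m = x then d h.choose else 0), ?_⟩
    intro i
    have hmem : d i ^ m ∈ Finset.image (fun i => d i ^ m) Finset.univ :=
      Finset.mem_image_of_mem _ (Finset.mem_univ i)
    have h := Lagrange.eval_interpolate_at_node
      (fun x => if h : ∃ i : Fin n, d i ^ m = x then d h.choose else 0)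
      (Set.injOn_id _) hmem
    simp only [id] at h
    rw [h]
    have hex : ∃ j : Fin n, d j ^ m = d i ^ m := ⟨i, rfl⟩
    simp only [dif_pos hex]
    exact h_inj _ _ hex.choose_spec
  obtain ⟨q, hq⟩ : ∃ q : Polynomial ℂ, ∀ i, q.eval (d i) = d i ^ m := by
    refine ⟨Lagrange.interpolate (Finset.image d Finset.univ) id (fun x => x ^ m), ?_⟩
    intro i
    have hmem : d i ∈ Finset.image d Finset.univ :=
      Finset.mem_image_of_mem _ (Finset.mem_univ i)
    have h := Lagrange.eval_interpolate_at_node (fun x => x ^ m) (Set.injOn_id _) hmem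
    simpa using h
  -- A is a polynomial in A^m and vice versa
  have hpA : Polynomial.aeval (↑(A ^ m) : Matrix (Fin n) (Fin n) ℂ) p
      = (↑A : Matrix (Fin n) (Fin n) ℂ) := by
    rw [hAm, aeval_conj_diag _ _ hQR hRQ, hA]
    have : (fun i => Polynomial.eval (d i ^ m) p) = d := funext hp
    rw [this]
  have hqA : Polynomial.aeval (↑A : Matrix (Fin n) (Fin n) ℂ) q
      = (↑(A ^ m) : Matrix (Fin n) (Fin n) ℂ) := by
    rw [hA, aeval_conj_diag _ _ hQR hRQ, hAm]
    have : (fun i => Polynomial.eval (d i) q) = fun i => d i ^ m := funext hq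
    rw [this]
  intro W
  constructor
  · intro h v hv
    rw [Matrix.mulVecLin_apply, ← hqA]
    exact inv_aeval _ W (fun u hu => by simpa [Matrix.mulVecLin_apply] using h u hu) q v hv
  · intro h v hv
    rw [Matrix.mulVecLin_apply, ← hpA]
    exact inv_aeval _ W (fun u hu => by simpa [Matrix.mulVecLin_apply] using h u hu) p v hv
end

section
/- For the Lawrence–Krammer representation ρ_n of the braid group B_n on ℂ^{n(n−1)/2}, the determinant of ρ_n(σ_i) equals −t·(−q)^n for every generator σ_i. -/
/-- Index set `{(j,k) : 1 ≤ j < k ≤ n}` for the basis `v_{j,k}` of the Lawrence–Krammer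
representation space `ℂ^{n(n-1)/2}`. -/
def LKIdx (n : ℕ) := {p : Fin (n + 1) × Fin (n + 1) // 1 ≤ (p.1 : ℕ) ∧ (p.1 : ℕ) < (p.2 : ℕ)}

instance (n : ℕ) : Fintype (LKIdx n) := Subtype.fintype _
instance (n : ℕ) : DecidableEq (LKIdx n) := Subtype.instDecidableEq

/-- The matrix of `ρ_n(σᵢ)` for the Lawrence–Krammer representation, in the basis
`{v_{j,k} : 1 ≤ j < k ≤ n}`: the entry at row `(a,b)`, column `(j,k)` is the coefficient
of `v_{a,b}` in `ρ_n(σᵢ) v_{j,k}`, following the standard formulas: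
`ρ_n(σᵢ) v_{j,k} = v_{j,k}` if `i ∉ {j-1, j, k-1, k}`;
`= q v_{i,k} + (q²-q) v_{i,j} + (1-q) v_{j,k}` if `i = j-1`;
`= v_{j+1,k}` if `i = j ≠ k-1`;
`= q v_{j,i} + (1-q) v_{j,k} - (q²-q) t v_{i,k}` if `i = k-1 ≠ j`;
`= v_{j,k+1}` if `i = k`; and `= -t q² v_{j,k}` if `i = j = k-1`. -/
def LK (n : ℕ) (q t : ℂ) (i : ℕ) : Matrix (LKIdx n) (LKIdx n) ℂ := fun r c =>
  let j : ℕ := (c.1.1 : ℕ); let k : ℕ := (c.1.2 : ℕ)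
  let a : ℕ := (r.1.1 : ℕ); let b : ℕ := (r.1.2 : ℕ)
  if i = j - 1 then
    (if (a, b) = (i, k) then q else 0) + (if (a, b) = (i, j) then q ^ 2 - q else 0) +
      (if (a, b) = (j, k) then 1 - q else 0)
  else if i = j ∧ i = k - 1 then (if (a, b) = (j, k) then -t * q ^ 2 else 0)
  else if i = j then (if (a, b) = (j + 1, k) then 1 else 0)
  else if i = k - 1 then
    (if (a, b) = (j, i) then q else 0) + (if (a, b) = (j, k) then 1 - q else 0) +
      (if (a, b) = (i, k) then -(q ^ 2 - q) * t else 0)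
  else if i = k then (if (a, b) = (j, k + 1) then 1 else 0)
  else (if (a, b) = (j, k) then 1 else 0)

namespace LK15

def lkmk (n a b : ℕ) (h : 1 ≤ a ∧ a < b ∧ b ≤ n) : LKIdx n :=
  ⟨(⟨a, by omega⟩, ⟨b, by omega⟩), ⟨h.1, h.2.1⟩⟩

@[simp] lemma lkmk_fst {n a b : ℕ} (h) : ((lkmk n a b h).1.1 : ℕ) = a := rfl
@[simp] lemma lkmk_snd {n a b : ℕ} (h) : ((lkmk n a b h).1.2 : ℕ) = b := rfl

lemma lk_ext {n : ℕ} {x y : LKIdx n} (h1 : (x.1.1 : ℕ) = (y.1.1 : ℕ))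
    (h2 : (x.1.2 : ℕ) = (y.1.2 : ℕ)) : x = y :=
  Subtype.ext (Prod.ext (Fin.ext h1) (Fin.ext h2))

lemma lk_prop {n : ℕ} (x : LKIdx n) :
    1 ≤ (x.1.1 : ℕ) ∧ (x.1.1 : ℕ) < (x.1.2 : ℕ) ∧ (x.1.2 : ℕ) ≤ n :=
  ⟨x.2.1, x.2.2, Nat.lt_succ_iff.mp x.1.2.isLt⟩

lemma eq_lkmk {n a b : ℕ} {h} {x : LKIdx n} :
    x = lkmk n a b h ↔ (x.1.1 : ℕ) = a ∧ (x.1.2 : ℕ) = b := by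
  constructor
  · rintro rfl; exact ⟨rfl, rfl⟩
  · rintro ⟨h1, h2⟩; exact lk_ext (by simp [h1]) (by simp [h2])

def Tf (n i : ℕ) (hi : 1 ≤ i) (hn : i + 1 ≤ n) (x : LKIdx n) : LKIdx n :=
  if h1 : (x.1.1 : ℕ) = i ∧ i + 1 < (x.1.2 : ℕ) then
    lkmk n (i+1) (x.1.2 : ℕ) (by have := lk_prop x; omega)
  else if h2 : (x.1.1 : ℕ) = i + 1 then
    lkmk n i (x.1.2 : ℕ) (by have := lk_prop x; omega)
  else if h3 : (x.1.2 : ℕ) = i then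
    lkmk n (x.1.1 : ℕ) (i+1) (by have := lk_prop x; omega)
  else if h4 : (x.1.2 : ℕ) = i + 1 ∧ (x.1.1 : ℕ) < i then
    lkmk n (x.1.1 : ℕ) i (by have := lk_prop x; omega)
  else x

lemma Tf_spec (n i : ℕ) (hi : 1 ≤ i) (hn : i + 1 ≤ n) (x : LKIdx n) :
    ((x.1.1:ℕ) = i ∧ i+1 < (x.1.2:ℕ) ∧ ((Tf n i hi hn x).1.1:ℕ) = i+1 ∧ ((Tf n i hi hn x).1.2:ℕ) = (x.1.2:ℕ)) ∨
    ((x.1.1:ℕ) = i+1 ∧ ((Tf n i hi hn x).1.1:ℕ) = i ∧ ((Tf n i hi hn x).1.2:ℕ) = (x.1.2:ℕ)) ∨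
    ((x.1.2:ℕ) = i ∧ ((Tf n i hi hn x).1.1:ℕ) = (x.1.1:ℕ) ∧ ((Tf n i hi hn x).1.2:ℕ) = i+1) ∨
    ((x.1.2:ℕ) = i+1 ∧ (x.1.1:ℕ) < i ∧ ((Tf n i hi hn x).1.1:ℕ) = (x.1.1:ℕ) ∧ ((Tf n i hi hn x).1.2:ℕ) = i) ∨
    ((x.1.1:ℕ) ≠ i+1 ∧ (x.1.2:ℕ) ≠ i ∧ ¬((x.1.1:ℕ) = i ∧ i+1 < (x.1.2:ℕ)) ∧ ¬((x.1.2:ℕ) = i+1 ∧ (x.1.1:ℕ) < i) ∧ Tf n i hi hn x = x) := by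
  unfold Tf
  split_ifs with h1 h2 h3 h4
  · exact Or.inl ⟨h1.1, h1.2, rfl, rfl⟩
  · exact Or.inr (Or.inl ⟨h2, rfl, rfl⟩)
  · exact Or.inr (Or.inr (Or.inl ⟨h3, rfl, rfl⟩))
  · exact Or.inr (Or.inr (Or.inr (Or.inl ⟨h4.1, h4.2, rfl, rfl⟩)))
  · exact Or.inr (Or.inr (Or.inr (Or.inr ⟨h2, h3, h1, h4, rfl⟩)))

def sw (n i : ℕ) (hi : 1 ≤ i) (hn : i + 1 ≤ n) (m : ℕ) : Equiv.Perm (LKIdx n) :=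
  if h : 1 ≤ m ∧ m ≤ n ∧ m < i then
    Equiv.swap (lkmk n m i (by omega)) (lkmk n m (i+1) (by omega))
  else if h' : i + 1 < m ∧ m ≤ n then
    Equiv.swap (lkmk n i m (by omega)) (lkmk n (i+1) m (by omega))
  else 1

lemma sw_lt (n i : ℕ) (hi : 1 ≤ i) (hn : i + 1 ≤ n) (m : ℕ) (h : 1 ≤ m ∧ m ≤ n ∧ m < i) :
    sw n i hi hn m = Equiv.swap (lkmk n m i (by omega)) (lkmk n m (i+1) (by omega)) := by
  unfold sw; rw [dif_pos h]

lemma sw_gt (n i : ℕ) (hi : 1 ≤ i) (hn : i + 1 ≤ n) (m : ℕ) (h : i + 1 < m ∧ m ≤ n) :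
    sw n i hi hn m = Equiv.swap (lkmk n i m (by omega)) (lkmk n (i+1) m (by omega)) := by
  unfold sw; rw [dif_neg (by omega), dif_pos h]

lemma swap_left {α : Type*} [DecidableEq α] {p q x : α} (h : x = p) : Equiv.swap p q x = q :=
  h ▸ Equiv.swap_apply_left p q

lemma swap_right {α : Type*} [DecidableEq α] {p q x : α} (h : x = q) : Equiv.swap p q x = p :=
  h ▸ Equiv.swap_apply_right p q

lemma sw_fix (n i : ℕ) (hi : 1 ≤ i) (hn : i + 1 ≤ n) (m : ℕ) (y : LKIdx n)
    (hm : m ≠ i ∧ m ≠ i + 1)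
    (h1 : ¬((y.1.1:ℕ) = m ∧ ((y.1.2:ℕ) = i ∨ (y.1.2:ℕ) = i+1)))
    (h2 : ¬((y.1.2:ℕ) = m ∧ ((y.1.1:ℕ) = i ∨ (y.1.1:ℕ) = i+1))) :
    sw n i hi hn m y = y := by
  unfold sw
  split_ifs with hA hB
  · refine Equiv.swap_apply_of_ne_of_ne ?_ ?_ <;> rw [Ne, eq_lkmk] <;> omega
  · refine Equiv.swap_apply_of_ne_of_ne ?_ ?_ <;> rw [Ne, eq_lkmk] <;> omega
  · rfl

lemma listprod_fix {α : Type*} (L : List ℕ) (g : ℕ → Equiv.Perm α) (x : α)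
    (h : ∀ m ∈ L, g m x = x) : (L.map g).prod x = x := by
  induction L with
  | nil => simp
  | cons a L ih =>
    simp only [List.map_cons, List.prod_cons, Equiv.Perm.mul_apply]
    rw [ih (fun m hm => h m (List.mem_cons_of_mem _ hm)), h a (List.mem_cons_self)]

lemma listprod_eval {α : Type*} (L : List ℕ) (g : ℕ → Equiv.Perm α) (x : α) (m₀ : ℕ)
    (hm : m₀ ∈ L) (hnd : L.Nodup)
    (h : ∀ m ∈ L, m ≠ m₀ → g m x = x ∧ g m (g m₀ x) = g m₀ x) :
    (L.map g).prod x = g m₀ x := by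
  induction L with
  | nil => simp at hm
  | cons a L ih =>
    simp only [List.map_cons, List.prod_cons, Equiv.Perm.mul_apply]
    rcases List.mem_cons.mp hm with rfl | hm'
    · rw [listprod_fix L g x]
      intro m hmL
      have hne : m ≠ m₀ := fun e => (List.nodup_cons.mp hnd).1 (e ▸ hmL)
      exact (h m (List.mem_cons_of_mem _ hmL) hne).1
    · have hne : a ≠ m₀ := fun e => (List.nodup_cons.mp hnd).1 (e ▸ hm')
      rw [ih hm' (List.nodup_cons.mp hnd).2 (fun m hm h' => h m (List.mem_cons_of_mem _ hm) h')]
      exact (h a (List.mem_cons_self) hne).2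

def lset (n i : ℕ) : Finset ℕ := (((Finset.range (n+1)).erase 0).erase i).erase (i+1)

lemma mem_lset {n i m : ℕ} : m ∈ lset n i ↔ m ≤ n ∧ m ≠ 0 ∧ m ≠ i ∧ m ≠ i+1 := by
  simp only [lset, Finset.mem_erase, Finset.mem_range]
  constructor <;> intro h <;> omega

lemma card_lset {n i : ℕ} (hi : 1 ≤ i) (hn : i + 1 ≤ n) : (lset n i).card = n - 2 := by
  have m3 : (i+1) ∈ ((Finset.range (n+1)).erase 0).erase i := by
    simp only [Finset.mem_erase, Finset.mem_range]; omega
  have m2 : i ∈ (Finset.range (n+1)).erase 0 := by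
    simp only [Finset.mem_erase, Finset.mem_range]; omega
  have m1 : 0 ∈ Finset.range (n+1) := by simp
  unfold lset
  rw [Finset.card_erase_of_mem m3, Finset.card_erase_of_mem m2,
    Finset.card_erase_of_mem m1, Finset.card_range]
  omega

noncomputable def tau (n i : ℕ) (hi : 1 ≤ i) (hn : i + 1 ≤ n) : Equiv.Perm (LKIdx n) :=
  (((lset n i).toList).map (sw n i hi hn)).prod

lemma tau_eq (n i : ℕ) (hi : 1 ≤ i) (hn : i + 1 ≤ n) (x : LKIdx n) :
    tau n i hi hn x = Tf n i hi hn x := by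
  have px := lk_prop x
  have pT := lk_prop (Tf n i hi hn x)
  have hnd := Finset.nodup_toList (lset n i)
  have hmem : ∀ m, m ∈ (lset n i).toList ↔ (m ≤ n ∧ m ≠ 0 ∧ m ≠ i ∧ m ≠ i+1) := by
    intro m; rw [Finset.mem_toList, mem_lset]
  rcases Tf_spec n i hi hn x with ⟨ha, hb, t1, t2⟩ | ⟨ha, t1, t2⟩ | ⟨hb, t1, t2⟩ |
    ⟨hb, ha, t1, t2⟩ | ⟨c1, c2, c3, c4, t⟩
  · have hswx : sw n i hi hn (x.1.2:ℕ) x = Tf n i hi hn x := by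
      rw [sw_gt n i hi hn _ ⟨hb, px.2.2⟩, swap_left (eq_lkmk.mpr ⟨ha, rfl⟩)]
      exact (eq_lkmk.mpr ⟨t1, t2⟩).symm
    rw [tau, listprod_eval _ _ x (x.1.2:ℕ) ((hmem _).mpr (by omega)) hnd ?_, hswx]
    intro m hm hne
    rw [hmem] at hm
    rw [hswx]
    exact ⟨sw_fix n i hi hn m x (by omega) (by omega) (by omega),
      sw_fix n i hi hn m _ (by omega) (by omega) (by omega)⟩
  · have hswx : sw n i hi hn (x.1.2:ℕ) x = Tf n i hi hn x := by
      rw [sw_gt n i hi hn _ ⟨by omega, px.2.2⟩, swap_right (eq_lkmk.mpr ⟨ha, rfl⟩)]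
      exact (eq_lkmk.mpr ⟨t1, t2⟩).symm
    rw [tau, listprod_eval _ _ x (x.1.2:ℕ) ((hmem _).mpr (by omega)) hnd ?_, hswx]
    intro m hm hne
    rw [hmem] at hm
    rw [hswx]
    exact ⟨sw_fix n i hi hn m x (by omega) (by omega) (by omega),
      sw_fix n i hi hn m _ (by omega) (by omega) (by omega)⟩
  · have hswx : sw n i hi hn (x.1.1:ℕ) x = Tf n i hi hn x := by
      rw [sw_lt n i hi hn _ ⟨px.1, by omega, by omega⟩, swap_left (eq_lkmk.mpr ⟨rfl, hb⟩)]
      exact (eq_lkmk.mpr ⟨t1, t2⟩).symm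
    rw [tau, listprod_eval _ _ x (x.1.1:ℕ) ((hmem _).mpr (by omega)) hnd ?_, hswx]
    intro m hm hne
    rw [hmem] at hm
    rw [hswx]
    exact ⟨sw_fix n i hi hn m x (by omega) (by omega) (by omega),
      sw_fix n i hi hn m _ (by omega) (by omega) (by omega)⟩
  · have hswx : sw n i hi hn (x.1.1:ℕ) x = Tf n i hi hn x := by
      rw [sw_lt n i hi hn _ ⟨px.1, by omega, ha⟩, swap_right (eq_lkmk.mpr ⟨rfl, hb⟩)]
      exact (eq_lkmk.mpr ⟨t1, t2⟩).symm
    rw [tau, listprod_eval _ _ x (x.1.1:ℕ) ((hmem _).mpr (by omega)) hnd ?_, hswx]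
    intro m hm hne
    rw [hmem] at hm
    rw [hswx]
    exact ⟨sw_fix n i hi hn m x (by omega) (by omega) (by omega),
      sw_fix n i hi hn m _ (by omega) (by omega) (by omega)⟩
  · rw [tau, t]
    exact listprod_fix _ _ _ (fun m hm => by
      rw [hmem] at hm
      exact sw_fix n i hi hn m x (by omega) (by omega) (by omega))

lemma sign_tau (n i : ℕ) (hi : 1 ≤ i) (hn : i + 1 ≤ n) :
    Equiv.Perm.sign (tau n i hi hn) = (-1) ^ (n - 2) := by
  unfold tau
  rw [map_list_prod, List.map_map]
  rw [List.prod_eq_pow_card _ (-1) ?_, List.length_map, Finset.length_toList,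
    card_lset hi hn]
  intro u hu
  simp only [List.mem_map, Function.comp_apply] at hu
  obtain ⟨m, hm, rfl⟩ := hu
  rw [Finset.mem_toList, mem_lset] at hm
  by_cases hlt : m < i
  · rw [sw_lt n i hi hn m ⟨by omega, by omega, hlt⟩]
    refine Equiv.Perm.sign_swap ?_
    rw [Ne, eq_lkmk]; simp
  · rw [sw_gt n i hi hn m ⟨by omega, by omega⟩]
    refine Equiv.Perm.sign_swap ?_
    rw [Ne, eq_lkmk]; simp


def w (n i : ℕ) (x : LKIdx n) : ℕ :=
  if (x.1.1:ℕ) = i ∧ (x.1.2:ℕ) = i+1 then 0 else (x.1.1:ℕ) * (n+2) + (x.1.2:ℕ) + 1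

lemma mul_add_cancel {a b a' b' N : ℕ} (hb : b ≤ N + 1) (hb' : b' ≤ N + 1)
    (h : a * (N+2) + b = a' * (N+2) + b') : a = a' ∧ b = b' := by
  have h1 : (a * (N+2) + b) % (N+2) = b := by
    rw [mul_comm, Nat.mul_add_mod]; exact Nat.mod_eq_of_lt (by omega)
  have h2 : (a' * (N+2) + b') % (N+2) = b' := by
    rw [mul_comm, Nat.mul_add_mod]; exact Nat.mod_eq_of_lt (by omega)
  have hbb : b = b' := by rw [← h1, ← h2, h]
  refine ⟨?_, hbb⟩
  subst hbb
  have := Nat.eq_of_mul_eq_mul_right (show 0 < N + 2 by omega) (by omega : a * (N+2) = a' * (N+2))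
  exact this

lemma wlt_core {a b a' b' N : ℕ} (hb : b ≤ N + 1) (hb' : b' ≤ N + 1)
    (h : a * (N+2) + b + 1 < a' * (N+2) + b' + 1) :
    a < a' ∨ (a = a' ∧ b < b') := by
  rcases lt_trichotomy a a' with hc | hc | hc
  · exact Or.inl hc
  · subst hc; right; exact ⟨rfl, by omega⟩
  · exfalso
    have h3 : (a' + 1) * (N+2) ≤ a * (N+2) := Nat.mul_le_mul_right _ (by omega)
    rw [Nat.succ_mul] at h3
    omega

lemma w_inj (n i : ℕ) : Function.Injective (w n i) := by
  intro x y h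
  have px := lk_prop x; have py := lk_prop y
  unfold w at h
  by_cases h1 : ((x.1.1:ℕ) = i ∧ (x.1.2:ℕ) = i+1) <;>
    by_cases h2 : ((y.1.1:ℕ) = i ∧ (y.1.2:ℕ) = i+1)
  · exact lk_ext (by omega) (by omega)
  · rw [if_pos h1, if_neg h2] at h; exact absurd h (by omega)
  · rw [if_neg h1, if_pos h2] at h; exact absurd h (by omega)
  · rw [if_neg h1, if_neg h2] at h
    obtain ⟨e1, e2⟩ := mul_add_cancel (N := n) (by omega) (by omega) (by omega : (x.1.1:ℕ) * (n+2) + (x.1.2:ℕ) = (y.1.1:ℕ) * (n+2) + (y.1.2:ℕ))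
    exact lk_ext e1 e2

lemma w_lt {n i : ℕ} {x y : LKIdx n} (h : w n i x < w n i y) :
    ¬((y.1.1:ℕ) = i ∧ (y.1.2:ℕ) = i+1) ∧
    (((x.1.1:ℕ) = i ∧ (x.1.2:ℕ) = i+1) ∨ (x.1.1:ℕ) < (y.1.1:ℕ) ∨
      ((x.1.1:ℕ) = (y.1.1:ℕ) ∧ (x.1.2:ℕ) < (y.1.2:ℕ))) := by
  have px := lk_prop x; have py := lk_prop y
  unfold w at h
  by_cases h2 : ((y.1.1:ℕ) = i ∧ (y.1.2:ℕ) = i+1)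
  · rw [if_pos h2] at h; exact absurd h (by omega)
  · rw [if_neg h2] at h
    refine ⟨h2, ?_⟩
    by_cases h1 : ((x.1.1:ℕ) = i ∧ (x.1.2:ℕ) = i+1)
    · exact Or.inl h1
    · rw [if_neg h1] at h
      right
      exact wlt_core (N := n) (by omega) (by omega) h


set_option maxHeartbeats 1000000 in
lemma tri (n i : ℕ) (hi : 1 ≤ i) (hn : i + 1 ≤ n) (q t : ℂ) (r c : LKIdx n)
    (hlt : w n i c < w n i r) : LK n q t i (Tf n i hi hn r) c = 0 := by
  obtain ⟨hc1, hc2⟩ := w_lt hlt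
  have pr := lk_prop r; have pc := lk_prop c; have pT := lk_prop (Tf n i hi hn r)
  have hs := Tf_spec n i hi hn r
  have hs' : (((r.1.1:ℕ) = i ∧ i+1 < (r.1.2:ℕ) ∧ ((Tf n i hi hn r).1.1:ℕ) = i+1 ∧ ((Tf n i hi hn r).1.2:ℕ) = (r.1.2:ℕ)) ∨
      ((r.1.1:ℕ) = i+1 ∧ ((Tf n i hi hn r).1.1:ℕ) = i ∧ ((Tf n i hi hn r).1.2:ℕ) = (r.1.2:ℕ)) ∨
      ((r.1.2:ℕ) = i ∧ ((Tf n i hi hn r).1.1:ℕ) = (r.1.1:ℕ) ∧ ((Tf n i hi hn r).1.2:ℕ) = i+1) ∨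
      ((r.1.2:ℕ) = i+1 ∧ (r.1.1:ℕ) < i ∧ ((Tf n i hi hn r).1.1:ℕ) = (r.1.1:ℕ) ∧ ((Tf n i hi hn r).1.2:ℕ) = i) ∨
      ((r.1.1:ℕ) ≠ i+1 ∧ (r.1.2:ℕ) ≠ i ∧ ¬((r.1.1:ℕ) = i ∧ i+1 < (r.1.2:ℕ)) ∧ ¬((r.1.2:ℕ) = i+1 ∧ (r.1.1:ℕ) < i) ∧ ((Tf n i hi hn r).1.1:ℕ) = (r.1.1:ℕ) ∧ ((Tf n i hi hn r).1.2:ℕ) = (r.1.2:ℕ))) := by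
    rcases hs with h | h | h | h | h
    · exact Or.inl h
    · exact Or.inr (Or.inl h)
    · exact Or.inr (Or.inr (Or.inl h))
    · exact Or.inr (Or.inr (Or.inr (Or.inl h)))
    · exact Or.inr (Or.inr (Or.inr (Or.inr ⟨h.1, h.2.1, h.2.2.1, h.2.2.2.1,
        by rw [h.2.2.2.2], by rw [h.2.2.2.2]⟩)))
  clear hs hlt
  simp only [LK, Prod.mk.injEq]
  split_ifs <;> first | rfl | (exfalso; omega) | norm_num

set_option maxHeartbeats 1000000 in
lemma diag (n i : ℕ) (hi : 1 ≤ i) (hn : i + 1 ≤ n) (q t : ℂ) (x : LKIdx n) :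
    LK n q t i (Tf n i hi hn x) x =
      if (x.1.1:ℕ) = i ∧ (x.1.2:ℕ) = i+1 then -t*q^2
      else if ((x.1.1:ℕ) = i+1 ∨ (x.1.2:ℕ) = i+1) then q else 1 := by
  have px := lk_prop x; have pT := lk_prop (Tf n i hi hn x)
  have hs := Tf_spec n i hi hn x
  have hs' : (((x.1.1:ℕ) = i ∧ i+1 < (x.1.2:ℕ) ∧ ((Tf n i hi hn x).1.1:ℕ) = i+1 ∧ ((Tf n i hi hn x).1.2:ℕ) = (x.1.2:ℕ)) ∨
      ((x.1.1:ℕ) = i+1 ∧ ((Tf n i hi hn x).1.1:ℕ) = i ∧ ((Tf n i hi hn x).1.2:ℕ) = (x.1.2:ℕ)) ∨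
      ((x.1.2:ℕ) = i ∧ ((Tf n i hi hn x).1.1:ℕ) = (x.1.1:ℕ) ∧ ((Tf n i hi hn x).1.2:ℕ) = i+1) ∨
      ((x.1.2:ℕ) = i+1 ∧ (x.1.1:ℕ) < i ∧ ((Tf n i hi hn x).1.1:ℕ) = (x.1.1:ℕ) ∧ ((Tf n i hi hn x).1.2:ℕ) = i) ∨
      ((x.1.1:ℕ) ≠ i+1 ∧ (x.1.2:ℕ) ≠ i ∧ ¬((x.1.1:ℕ) = i ∧ i+1 < (x.1.2:ℕ)) ∧ ¬((x.1.2:ℕ) = i+1 ∧ (x.1.1:ℕ) < i) ∧ ((Tf n i hi hn x).1.1:ℕ) = (x.1.1:ℕ) ∧ ((Tf n i hi hn x).1.2:ℕ) = (x.1.2:ℕ))) := by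
    rcases hs with h | h | h | h | h
    · exact Or.inl h
    · exact Or.inr (Or.inl h)
    · exact Or.inr (Or.inr (Or.inl h))
    · exact Or.inr (Or.inr (Or.inr (Or.inl h)))
    · exact Or.inr (Or.inr (Or.inr (Or.inr ⟨h.1, h.2.1, h.2.2.1, h.2.2.2.1,
        by rw [h.2.2.2.2], by rw [h.2.2.2.2]⟩)))
  clear hs
  simp only [LK, Prod.mk.injEq]
  split_ifs <;> first | rfl | (exfalso; omega) | norm_num


lemma card_q (n i : ℕ) (hi : 1 ≤ i) (hn : i + 1 ≤ n) (A : LKIdx n)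
    (hA1 : (A.1.1:ℕ) = i) (hA2 : (A.1.2:ℕ) = i+1) :
    ((Finset.univ.erase A).filter
      (fun x : LKIdx n => (x.1.1:ℕ) = i+1 ∨ (x.1.2:ℕ) = i+1)).card = n - 2 := by
  rw [← card_lset (i := i) hi hn]
  refine Finset.card_bij' (fun x _ => if (x.1.1:ℕ) = i+1 then (x.1.2:ℕ) else (x.1.1:ℕ))
    (fun m hm => if h : m < i then lkmk n m (i+1) (by have := mem_lset.mp hm; omega)
      else lkmk n (i+1) m (by have := mem_lset.mp hm; omega)) ?_ ?_ ?_ ?_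
  · intro x hx
    simp only [Finset.mem_filter, Finset.mem_erase, Finset.mem_univ, true_and, and_true] at hx
    have px := lk_prop x
    have hxA : ¬((x.1.1:ℕ) = i ∧ (x.1.2:ℕ) = i+1) := fun hh =>
      hx.1 (lk_ext (by omega) (by omega))
    rw [mem_lset]
    split_ifs <;> omega
  · intro m hm
    have hm' := mem_lset.mp hm
    simp only [Finset.mem_filter, Finset.mem_erase, Finset.mem_univ, true_and, and_true]
    split_ifs with h
    · refine ⟨fun he => ?_, by simp⟩
      have := (eq_lkmk.mp he.symm).1
      omega
    · refine ⟨fun he => ?_, by simp⟩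
      have := (eq_lkmk.mp he.symm).2
      omega
  · intro x hx
    simp only [Finset.mem_filter, Finset.mem_erase, Finset.mem_univ, true_and, and_true] at hx
    have px := lk_prop x
    have hxA : ¬((x.1.1:ℕ) = i ∧ (x.1.2:ℕ) = i+1) := fun hh =>
      hx.1 (lk_ext (by omega) (by omega))
    split_ifs with h1 h2 h2 <;> exact (eq_lkmk.mpr (by omega)).symm
  · intro m hm
    have hm' := mem_lset.mp hm
    split_ifs with h1 h2 h2 <;>
      first
      | exact lkmk_fst _
      | exact lkmk_snd _
      | (exfalso; rw [lkmk_fst] at h2; omega)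

end LK15

open LK15

/-- The determinant of the Lawrence–Krammer matrix `ρ_n(σᵢ)` equals `-t·(-q)ⁿ` for every
generator `σᵢ`, `1 ≤ i ≤ n-1`. -/
theorem stmt15 (n : ℕ) (hn : 2 ≤ n) (q t : ℂ) (i : ℕ) (hi1 : 1 ≤ i) (hi2 : i ≤ n - 1) :
    (LK n q t i).det = -t * (-q) ^ n := by
  have hn' : i + 1 ≤ n := by omega
  set A : LKIdx n := lkmk n i (i+1) ⟨hi1, by omega, hn'⟩ with hA
  letI : LinearOrder (LKIdx n) := LinearOrder.lift' (w n i) (w_inj n i)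
  have hperm := Matrix.det_permute (tau n i hi1 hn') (LK n q t i)
  have htri : ((LK n q t i).submatrix (tau n i hi1 hn') id).BlockTriangular id := by
    intro r c hrc
    have hlt : w n i c < w n i r := hrc
    simp only [Matrix.submatrix_apply, id]
    rw [tau_eq]
    exact tri n i hi1 hn' q t r c hlt
  have hdet := Matrix.det_of_upperTriangular htri
  have hdiag : ∀ x ∈ Finset.univ, ((LK n q t i).submatrix (tau n i hi1 hn') id) x x =
      (if (x.1.1:ℕ) = i ∧ (x.1.2:ℕ) = i+1 then -t*q^2
        else if ((x.1.1:ℕ) = i+1 ∨ (x.1.2:ℕ) = i+1) then q else 1) := by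
    intro x _
    simp only [Matrix.submatrix_apply, id]
    rw [tau_eq]
    exact diag n i hi1 hn' q t x
  rw [Finset.prod_congr rfl hdiag] at hdet
  have hprod : (∏ x : LKIdx n, (if (x.1.1:ℕ) = i ∧ (x.1.2:ℕ) = i+1 then -t*q^2
      else if ((x.1.1:ℕ) = i+1 ∨ (x.1.2:ℕ) = i+1) then q else 1)) = -t * q^2 * q^(n-2) := by
    rw [← Finset.mul_prod_erase _ _ (Finset.mem_univ A)]
    have h1 : (if (A.1.1:ℕ) = i ∧ (A.1.2:ℕ) = i+1 then -t*q^2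
        else if ((A.1.1:ℕ) = i+1 ∨ (A.1.2:ℕ) = i+1) then q else 1) = -t*q^2 := by
      rw [if_pos ⟨rfl, rfl⟩]
    rw [h1]
    have h2 : ∀ x ∈ Finset.univ.erase A, (if (x.1.1:ℕ) = i ∧ (x.1.2:ℕ) = i+1 then -t*q^2
        else if ((x.1.1:ℕ) = i+1 ∨ (x.1.2:ℕ) = i+1) then q else (1:ℂ)) =
        (if ((x.1.1:ℕ) = i+1 ∨ (x.1.2:ℕ) = i+1) then q else 1) := by
      intro x hx
      rw [if_neg]
      intro hh
      exact (Finset.mem_erase.mp hx).1 (lk_ext (by simp [hA, hh.1]) (by simp [hA, hh.2]))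
    rw [Finset.prod_congr rfl h2, Finset.prod_ite, Finset.prod_const, Finset.prod_const_one,
      mul_one, card_q n i hi1 hn' A rfl rfl, mul_assoc]
  rw [hprod] at hdet
  rw [sign_tau n i hi1 hn'] at hperm
  rw [hdet] at hperm
  have hcast : ((((-1:ℤˣ)^(n-2) : ℤˣ) : ℤ) : ℂ) = (-1:ℂ)^(n-2) := by push_cast; ring
  rw [hcast] at hperm
  have h11 : (-1:ℂ)^(n-2) * (-1:ℂ)^(n-2) = 1 := by
    rw [← pow_add, ← two_mul, pow_mul]; norm_num
  have hqn : q^2 * q^(n-2) = q^n := by rw [← pow_add]; congr 1; omega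
  have hneg : (-1:ℂ)^n = (-1:ℂ)^(n-2) := by
    have : n = 2 + (n-2) := by omega
    rw [this, pow_add]; norm_num
  calc (LK n q t i).det
      = ((-1:ℂ)^(n-2)) * (((-1:ℂ)^(n-2)) * (LK n q t i).det) := by
        rw [← mul_assoc, h11, one_mul]
    _ = ((-1:ℂ)^(n-2)) * (-t * q^2 * q^(n-2)) := by rw [← hperm]
    _ = -t * (-q)^n := by
        rw [neg_pow q n, hneg, ← hqn]; ring
end

section
/- For each generator σ_i of B_n, the eigenvalues of the Lawrence–Krammer matrix ρ_n(σ_i) (with multiplicity) are: −tq² with multiplicity 1, −q with multiplicity n−2, and 1 with multiplicity (n−1)(n−2)/2. -/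
open Polynomial

namespace LKProof
set_option maxHeartbeats 1000000

/-! ### Basic index helpers -/

lemma lkBounds {n : ℕ} (p : LKIdx n) :
    1 ≤ (p.1.1 : ℕ) ∧ (p.1.1 : ℕ) < (p.1.2 : ℕ) ∧ (p.1.2 : ℕ) ≤ n :=
  ⟨p.2.1, p.2.2, Nat.lt_succ_iff.mp p.1.2.isLt⟩

def mk (n a b : ℕ) (h1 : 1 ≤ a) (h2 : a < b) (h3 : b ≤ n) : LKIdx n :=
  ⟨(⟨a, by omega⟩, ⟨b, by omega⟩), ⟨h1, h2⟩⟩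

@[simp] lemma mk_fst (n a b : ℕ) (h1 h2 h3) : (((mk n a b h1 h2 h3).1.1 : ℕ)) = a := rfl
@[simp] lemma mk_snd (n a b : ℕ) (h1 h2 h3) : (((mk n a b h1 h2 h3).1.2 : ℕ)) = b := rfl

lemma ext' {n : ℕ} {p r : LKIdx n} (h1 : (p.1.1 : ℕ) = (r.1.1 : ℕ))
    (h2 : (p.1.2 : ℕ) = (r.1.2 : ℕ)) : p = r :=
  Subtype.ext (Prod.ext (Fin.ext h1) (Fin.ext h2))

/-! ### The block grading -/

def bf (i j k : ℕ) : ℕ × ℕ :=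
  if j = i ∧ k = i + 1 then (0, 0)
  else if j = i + 1 then (i + 1, k)
  else if k = i + 1 then (j + 1, i)
  else (j + 1, k)

def bb (n i : ℕ) (p : LKIdx n) : Lex (ℕ × ℕ) := toLex (bf i (p.1.1 : ℕ) (p.1.2 : ℕ))

lemma le_helper {x y : ℕ × ℕ} (h : x = y ∨ x = (0, 0)) : toLex x ≤ toLex y := by
  rcases h with rfl | rfl
  · exact le_rfl
  · rw [Prod.Lex.le_iff]
    rcases Nat.eq_zero_or_pos y.1 with h0 | h0
    · exact Or.inr ⟨h0.symm, Nat.zero_le _⟩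
    · exact Or.inl h0

lemma key {n i : ℕ} (q t : ℂ) (hi1 : 1 ≤ i) {r c : LKIdx n}
    (h : LK n q t i r c ≠ 0) : bb n i r ≤ bb n i c := by
  obtain ⟨hr1, hr2, hr3⟩ := lkBounds r
  obtain ⟨hc1, hc2, hc3⟩ := lkBounds c
  have goal_helper : ∀ (x y : ℕ × ℕ), (x = y ∨ x = (0,0)) → toLex x ≤ toLex y :=
    fun x y hxy => le_helper hxy
  simp only [LK] at h
  unfold bb
  split_ifs at h <;>
    first
      | (apply goal_helper
         simp only [Prod.mk.injEq] at *
         unfold bf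
         split_ifs <;> simp only [Prod.mk.injEq, and_true, true_and, or_true, true_or] <;> omega)
      | simp at h


/-! ### Determinants of small blocks -/

lemma det_block_single {m : Type*} [Fintype m] [DecidableEq m] {β : Type*} [DecidableEq β]
    (A : Matrix m m ℂ[X]) (b : m → β) (x : m)
    (hfib : ∀ z, b z = b x ↔ z = x) :
    (A.toSquareBlock b (b x)).det = A x x := by
  have huniq : ∀ z : {a // b a = b x}, z = ⟨x, rfl⟩ :=
    fun z => Subtype.ext ((hfib z.1).mp z.2)
  letI : Unique {a // b a = b x} := ⟨⟨⟨x, rfl⟩⟩, huniq⟩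
  rw [Matrix.det_unique]
  rfl

lemma det_block_pair {m : Type*} [Fintype m] [DecidableEq m] {β : Type*} [DecidableEq β]
    (A : Matrix m m ℂ[X]) (b : m → β) (x y : m) (hxy : x ≠ y)
    (hfib : ∀ z, b z = b x ↔ z = x ∨ z = y) :
    (A.toSquareBlock b (b x)).det = A x x * A y y - A x y * A y x := by
  have hy : b y = b x := (hfib y).mpr (Or.inr rfl)
  let e : Fin 2 ≃ {a // b a = b x} :=
  { toFun := fun v => if v = 0 then ⟨x, rfl⟩ else ⟨y, hy⟩
    invFun := fun z => if (z : m) = x then 0 else 1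
    left_inv := by
      intro v
      fin_cases v
      · simp
      · simp only [Fin.mk_one, one_ne_zero, if_false]
        rw [if_neg (fun h : y = x => hxy h.symm)]
    right_inv := by
      intro z
      rcases (hfib z.1).mp z.2 with h | h
      · simp only [h, if_pos rfl]
        exact Subtype.ext h.symm
      · by_cases hzx : (z : m) = x
        · simp only [hzx, if_pos rfl]
          exact Subtype.ext hzx.symm
        · simp only [hzx, if_false, if_neg one_ne_zero]
          exact Subtype.ext h.symm }
  rw [← Matrix.det_submatrix_equiv_self e, Matrix.det_fin_two]
  simp only [Matrix.submatrix_apply, Matrix.toSquareBlock_def, e, Equiv.coe_fn_mk]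
  norm_num


/-! ### Fibers of the grading -/

section Fibers
variable {n i : ℕ}

lemma fiberE0 (hi1 : 1 ≤ i) (x : LKIdx n) (hx1 : (x.1.1 : ℕ) = i)
    (hx2 : (x.1.2 : ℕ) = i + 1) (z : LKIdx n) :
    bb n i z = bb n i x ↔ z = x := by
  constructor
  · intro h
    obtain ⟨hz1, hz2, hz3⟩ := lkBounds z
    have hv : (z.1.1 : ℕ) = (x.1.1 : ℕ) ∧ (z.1.2 : ℕ) = (x.1.2 : ℕ) := by
      unfold bb bf at h
      rw [toLex_inj] at h
      split_ifs at h <;> simp only [Prod.mk.injEq] at h <;> omega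
    exact ext' hv.1 hv.2
  · rintro rfl; rfl

lemma fiberPair1 (hi1 : 1 ≤ i) (x : LKIdx n) (hx1 : (x.1.1 : ℕ) = i)
    (hx2 : i + 2 ≤ (x.1.2 : ℕ)) (y : LKIdx n) (hy1 : (y.1.1 : ℕ) = i + 1)
    (hy2 : (y.1.2 : ℕ) = (x.1.2 : ℕ)) (z : LKIdx n) :
    bb n i z = bb n i x ↔ z = x ∨ z = y := by
  constructor
  · intro h
    obtain ⟨hz1, hz2, hz3⟩ := lkBounds z
    have hv : ((z.1.1 : ℕ) = (x.1.1 : ℕ) ∧ (z.1.2 : ℕ) = (x.1.2 : ℕ)) ∨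
        ((z.1.1 : ℕ) = (y.1.1 : ℕ) ∧ (z.1.2 : ℕ) = (y.1.2 : ℕ)) := by
      unfold bb bf at h
      rw [toLex_inj] at h
      split_ifs at h <;> simp only [Prod.mk.injEq] at h <;> omega
    rcases hv with hv | hv
    · exact Or.inl (ext' hv.1 hv.2)
    · exact Or.inr (ext' hv.1 hv.2)
  · rintro (rfl | rfl)
    · rfl
    · obtain ⟨hz1, hz2, hz3⟩ := lkBounds z
      unfold bb bf
      rw [toLex_inj]
      split_ifs <;> simp only [Prod.mk.injEq] <;> omega

lemma fiberPair2 (hi1 : 1 ≤ i) (x : LKIdx n) (hx2 : (x.1.2 : ℕ) = i)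
    (y : LKIdx n) (hy1 : (y.1.1 : ℕ) = (x.1.1 : ℕ)) (hy2 : (y.1.2 : ℕ) = i + 1)
    (z : LKIdx n) :
    bb n i z = bb n i x ↔ z = x ∨ z = y := by
  have hx1 := (lkBounds x).1
  have hxlt := (lkBounds x).2.1
  constructor
  · intro h
    obtain ⟨hz1, hz2, hz3⟩ := lkBounds z
    have hv : ((z.1.1 : ℕ) = (x.1.1 : ℕ) ∧ (z.1.2 : ℕ) = (x.1.2 : ℕ)) ∨
        ((z.1.1 : ℕ) = (y.1.1 : ℕ) ∧ (z.1.2 : ℕ) = (y.1.2 : ℕ)) := by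
      unfold bb bf at h
      rw [toLex_inj] at h
      split_ifs at h <;> simp only [Prod.mk.injEq] at h <;> omega
    rcases hv with hv | hv
    · exact Or.inl (ext' hv.1 hv.2)
    · exact Or.inr (ext' hv.1 hv.2)
  · rintro (rfl | rfl)
    · rfl
    · obtain ⟨hz1, hz2, hz3⟩ := lkBounds z
      unfold bb bf
      rw [toLex_inj]
      split_ifs <;> simp only [Prod.mk.injEq] <;> omega

lemma fiberFix (hi1 : 1 ≤ i) (x : LKIdx n) (hx1 : (x.1.1 : ℕ) ≠ i)
    (hx2 : (x.1.1 : ℕ) ≠ i + 1) (hx3 : (x.1.2 : ℕ) ≠ i) (hx4 : (x.1.2 : ℕ) ≠ i + 1)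
    (z : LKIdx n) :
    bb n i z = bb n i x ↔ z = x := by
  constructor
  · intro h
    obtain ⟨hz1, hz2, hz3⟩ := lkBounds z
    have hv : (z.1.1 : ℕ) = (x.1.1 : ℕ) ∧ (z.1.2 : ℕ) = (x.1.2 : ℕ) := by
      unfold bb bf at h
      rw [toLex_inj] at h
      split_ifs at h <;> simp only [Prod.mk.injEq] at h <;> omega
    exact ext' hv.1 hv.2
  · rintro rfl; rfl

end Fibers

/-! ### Entries of LK -/

section Entries
variable {n i : ℕ} {q t : ℂ}

lemma entryE0 (hi1 : 1 ≤ i) (x : LKIdx n) (hx1 : (x.1.1 : ℕ) = i)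
    (hx2 : (x.1.2 : ℕ) = i + 1) : LK n q t i x x = -t * q ^ 2 := by
  obtain ⟨h1, h2, h3⟩ := lkBounds x
  simp only [LK]
  split_ifs <;> simp -failIfUnchanged only [Prod.mk.injEq] at * <;> first | rfl | omega | norm_num

lemma entry1_xx (hi1 : 1 ≤ i) (x : LKIdx n) (hx1 : (x.1.1 : ℕ) = i)
    (hx2 : i + 2 ≤ (x.1.2 : ℕ)) : LK n q t i x x = 0 := by
  obtain ⟨h1, h2, h3⟩ := lkBounds x
  simp only [LK]
  split_ifs <;> simp -failIfUnchanged only [Prod.mk.injEq] at * <;> first | rfl | omega | norm_num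

lemma entry1_xy (hi1 : 1 ≤ i) (x y : LKIdx n) (hx1 : (x.1.1 : ℕ) = i)
    (hx2 : i + 2 ≤ (x.1.2 : ℕ)) (hy1 : (y.1.1 : ℕ) = i + 1)
    (hy2 : (y.1.2 : ℕ) = (x.1.2 : ℕ)) : LK n q t i x y = q := by
  obtain ⟨h1, h2, h3⟩ := lkBounds x
  obtain ⟨h4, h5, h6⟩ := lkBounds y
  simp only [LK]
  split_ifs <;> simp only [Prod.mk.injEq] at * <;> first | rfl | omega | norm_num

lemma entry1_yx (hi1 : 1 ≤ i) (x y : LKIdx n) (hx1 : (x.1.1 : ℕ) = i)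
    (hx2 : i + 2 ≤ (x.1.2 : ℕ)) (hy1 : (y.1.1 : ℕ) = i + 1)
    (hy2 : (y.1.2 : ℕ) = (x.1.2 : ℕ)) : LK n q t i y x = 1 := by
  obtain ⟨h1, h2, h3⟩ := lkBounds x
  obtain ⟨h4, h5, h6⟩ := lkBounds y
  simp only [LK]
  split_ifs <;> simp only [Prod.mk.injEq] at * <;> first | rfl | omega | norm_num

lemma entry1_yy (hi1 : 1 ≤ i) (y : LKIdx n) (hy1 : (y.1.1 : ℕ) = i + 1) :
    LK n q t i y y = 1 - q := by
  obtain ⟨h4, h5, h6⟩ := lkBounds y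
  simp only [LK]
  split_ifs <;> simp -failIfUnchanged only [Prod.mk.injEq] at * <;> first | rfl | omega | norm_num

lemma entry2_xx (hi1 : 1 ≤ i) (x : LKIdx n) (hx2 : (x.1.2 : ℕ) = i) :
    LK n q t i x x = 0 := by
  obtain ⟨h1, h2, h3⟩ := lkBounds x
  simp only [LK]
  split_ifs <;> simp -failIfUnchanged only [Prod.mk.injEq] at * <;> first | rfl | omega | norm_num

lemma entry2_xy (hi1 : 1 ≤ i) (x y : LKIdx n) (hx2 : (x.1.2 : ℕ) = i)
    (hy1 : (y.1.1 : ℕ) = (x.1.1 : ℕ)) (hy2 : (y.1.2 : ℕ) = i + 1) :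
    LK n q t i x y = q := by
  obtain ⟨h1, h2, h3⟩ := lkBounds x
  obtain ⟨h4, h5, h6⟩ := lkBounds y
  simp only [LK]
  split_ifs <;> simp only [Prod.mk.injEq] at * <;> first | rfl | omega | norm_num

lemma entry2_yx (hi1 : 1 ≤ i) (x y : LKIdx n) (hx2 : (x.1.2 : ℕ) = i)
    (hy1 : (y.1.1 : ℕ) = (x.1.1 : ℕ)) (hy2 : (y.1.2 : ℕ) = i + 1) :
    LK n q t i y x = 1 := by
  obtain ⟨h1, h2, h3⟩ := lkBounds x
  obtain ⟨h4, h5, h6⟩ := lkBounds y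
  simp only [LK]
  split_ifs <;> simp only [Prod.mk.injEq] at * <;> first | rfl | omega | norm_num

lemma entry2_yy (hi1 : 1 ≤ i) (x y : LKIdx n) (hx2 : (x.1.2 : ℕ) = i)
    (hy1 : (y.1.1 : ℕ) = (x.1.1 : ℕ)) (hy2 : (y.1.2 : ℕ) = i + 1) :
    LK n q t i y y = 1 - q := by
  obtain ⟨h1, h2, h3⟩ := lkBounds x
  obtain ⟨h4, h5, h6⟩ := lkBounds y
  simp only [LK]
  split_ifs <;> simp -failIfUnchanged only [Prod.mk.injEq] at * <;> first | rfl | omega | norm_num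

lemma entryFix (hi1 : 1 ≤ i) (x : LKIdx n) (hx1 : (x.1.1 : ℕ) ≠ i)
    (hx2 : (x.1.1 : ℕ) ≠ i + 1) (hx3 : (x.1.2 : ℕ) ≠ i) (hx4 : (x.1.2 : ℕ) ≠ i + 1) :
    LK n q t i x x = 1 := by
  obtain ⟨h1, h2, h3⟩ := lkBounds x
  simp only [LK]
  split_ifs <;> simp -failIfUnchanged only [Prod.mk.injEq] at * <;> first | rfl | omega | norm_num

end Entries

/-! ### Determinants of the diagonal blocks -/

section Dets
variable {n i : ℕ} {q t : ℂ}

lemma detE0 (hi1 : 1 ≤ i) (x : LKIdx n) (hx1 : (x.1.1 : ℕ) = i)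
    (hx2 : (x.1.2 : ℕ) = i + 1) :
    (((LK n q t i).charmatrix).toSquareBlock (bb n i) (bb n i x)).det
      = X - C (-t * q ^ 2) := by
  rw [det_block_single _ _ _ (fiberE0 hi1 x hx1 hx2), Matrix.charmatrix_apply_eq,
    entryE0 hi1 x hx1 hx2]

lemma detPair1 (hi1 : 1 ≤ i) (x y : LKIdx n) (hx1 : (x.1.1 : ℕ) = i)
    (hx2 : i + 2 ≤ (x.1.2 : ℕ)) (hy1 : (y.1.1 : ℕ) = i + 1)
    (hy2 : (y.1.2 : ℕ) = (x.1.2 : ℕ)) :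
    (((LK n q t i).charmatrix).toSquareBlock (bb n i) (bb n i x)).det
      = (X - C 1) * (X - C (-q)) := by
  have hxy : x ≠ y := by
    intro h; rw [h] at hx1; omega
  rw [det_block_pair _ _ x y hxy (fiberPair1 hi1 x hx1 hx2 y hy1 hy2),
    Matrix.charmatrix_apply_eq, Matrix.charmatrix_apply_eq,
    Matrix.charmatrix_apply_ne _ _ _ hxy, Matrix.charmatrix_apply_ne _ _ _ hxy.symm,
    entry1_xx hi1 x hx1 hx2, entry1_yy hi1 y hy1, entry1_xy hi1 x y hx1 hx2 hy1 hy2,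
    entry1_yx hi1 x y hx1 hx2 hy1 hy2]
  simp only [map_sub, map_one, map_zero, map_neg]
  ring

lemma detPair2 (hi1 : 1 ≤ i) (x y : LKIdx n) (hx2 : (x.1.2 : ℕ) = i)
    (hy1 : (y.1.1 : ℕ) = (x.1.1 : ℕ)) (hy2 : (y.1.2 : ℕ) = i + 1) :
    (((LK n q t i).charmatrix).toSquareBlock (bb n i) (bb n i x)).det
      = (X - C 1) * (X - C (-q)) := by
  have hxy : x ≠ y := by
    intro h; rw [h] at hx2; omega
  rw [det_block_pair _ _ x y hxy (fiberPair2 hi1 x hx2 y hy1 hy2),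
    Matrix.charmatrix_apply_eq, Matrix.charmatrix_apply_eq,
    Matrix.charmatrix_apply_ne _ _ _ hxy, Matrix.charmatrix_apply_ne _ _ _ hxy.symm,
    entry2_xx hi1 x hx2, entry2_yy hi1 x y hx2 hy1 hy2, entry2_xy hi1 x y hx2 hy1 hy2,
    entry2_yx hi1 x y hx2 hy1 hy2]
  simp only [map_sub, map_one, map_zero, map_neg]
  ring

lemma detFix (hi1 : 1 ≤ i) (x : LKIdx n) (hx1 : (x.1.1 : ℕ) ≠ i)
    (hx2 : (x.1.1 : ℕ) ≠ i + 1) (hx3 : (x.1.2 : ℕ) ≠ i) (hx4 : (x.1.2 : ℕ) ≠ i + 1) :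
    (((LK n q t i).charmatrix).toSquareBlock (bb n i) (bb n i x)).det = X - C 1 := by
  rw [det_block_single _ _ _ (fiberFix hi1 x hx1 hx2 hx3 hx4), Matrix.charmatrix_apply_eq,
    entryFix hi1 x hx1 hx2 hx3 hx4]

end Dets

/-! ### Representatives -/

section Reps
variable {n i : ℕ}

def isRep (i : ℕ) (p : LKIdx n) : Prop :=
  (p.1.1 : ℕ) ≠ i + 1 ∧ ((p.1.2 : ℕ) ≠ i + 1 ∨ (p.1.1 : ℕ) = i)

instance (i : ℕ) (p : LKIdx n) : Decidable (isRep i p) := by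
  unfold isRep; infer_instance

lemma image_eq (hn : 2 ≤ n) (hi1 : 1 ≤ i) (hi2 : i ≤ n - 1) :
    Finset.univ.image (bb n i)
      = (Finset.univ.filter (fun p : LKIdx n => isRep i p)).image (bb n i) := by
  apply Finset.Subset.antisymm
  · intro v hv
    rw [Finset.mem_image] at hv
    obtain ⟨p, -, rfl⟩ := hv
    rw [Finset.mem_image]
    obtain ⟨hp1, hp2, hp3⟩ := lkBounds p
    by_cases h1 : (p.1.1 : ℕ) = i + 1
    · refine ⟨mk n i (p.1.2 : ℕ) hi1 (by omega) (by omega), ?_, ?_⟩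
      · rw [Finset.mem_filter]
        simp only [Finset.mem_filter, Finset.mem_univ, true_and, isRep, mk_fst, mk_snd]
        omega
      · unfold bb bf
        rw [toLex_inj]
        simp only [mk_fst, mk_snd]
        grind
    · by_cases h2 : (p.1.2 : ℕ) = i + 1 ∧ (p.1.1 : ℕ) ≠ i
      · refine ⟨mk n (p.1.1 : ℕ) i hp1 (by omega) (by omega), ?_, ?_⟩
        · rw [Finset.mem_filter]
          simp only [Finset.mem_filter, Finset.mem_univ, true_and, isRep, mk_fst, mk_snd]
          omega
        · unfold bb bf
          rw [toLex_inj]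
          simp only [mk_fst, mk_snd]
          grind
      · refine ⟨p, ?_, rfl⟩
        rw [Finset.mem_filter]
        simp only [Finset.mem_filter, Finset.mem_univ, true_and, isRep]
        omega
  · exact Finset.image_subset_image (Finset.filter_subset _ _)

lemma injOnReps (hi1 : 1 ≤ i) :
    ∀ p ∈ Finset.univ.filter (fun p : LKIdx n => isRep i p),
      ∀ r ∈ Finset.univ.filter (fun p : LKIdx n => isRep i p),
        bb n i p = bb n i r → p = r := by
  intro p hp r hr h
  rw [Finset.mem_filter] at hp hr
  simp only [Finset.mem_filter, Finset.mem_univ, true_and, isRep] at hp hr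
  obtain ⟨hp0, hp4, hp5⟩ := lkBounds p
  obtain ⟨hr0, hr4, hr5⟩ := lkBounds r
  have hv : (p.1.1 : ℕ) = (r.1.1 : ℕ) ∧ (p.1.2 : ℕ) = (r.1.2 : ℕ) := by
    unfold bb bf at h
    rw [toLex_inj] at h
    split_ifs at h <;> simp only [Prod.mk.injEq] at h <;> omega
  exact ext' hv.1 hv.2

end Reps

/-! ### Counting -/

def Tri (m : ℕ) : Finset (ℕ × ℕ) :=
  (Finset.Icc 1 m ×ˢ Finset.Icc 1 m).filter fun p => p.1 < p.2

lemma mem_Tri {m : ℕ} {p : ℕ × ℕ} : p ∈ Tri m ↔ 1 ≤ p.1 ∧ p.1 < p.2 ∧ p.2 ≤ m := by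
  simp only [Tri, Finset.mem_filter, Finset.mem_product, Finset.mem_Icc]
  omega

lemma Tri_card (m : ℕ) : (Tri m).card = m * (m - 1) / 2 := by
  induction m with
  | zero =>
    have : Tri 0 = ∅ := by
      ext p; simp [mem_Tri]; omega
    simp [this]
  | succ m ih =>
    have hsplit : Tri (m + 1) = Tri m ∪ (Finset.Icc 1 m ×ˢ {m + 1}) := by
      ext p
      simp only [mem_Tri, Finset.mem_union, Finset.mem_product, Finset.mem_Icc,
        Finset.mem_singleton]
      omega
    have hdisj : Disjoint (Tri m) (Finset.Icc 1 m ×ˢ {m + 1}) := by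
      rw [Finset.disjoint_left]
      intro p hp hp2
      rw [mem_Tri] at hp
      simp only [Finset.mem_product, Finset.mem_Icc, Finset.mem_singleton] at hp2
      omega
    rw [hsplit, Finset.card_union_of_disjoint hdisj, ih, Finset.card_product,
      Finset.card_singleton, Nat.card_Icc]
    obtain ⟨c, hc⟩ : ∃ c, m * (m - 1) = 2 * c := by
      rcases Nat.even_or_odd m with ⟨a, ha⟩ | ⟨a, ha⟩
      · exact ⟨a * (m - 1), by rw [ha]; ring⟩
      · have hm1 : m - 1 = 2 * a := by omega
        exact ⟨m * a, by rw [hm1]; ring⟩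
    have h2 : (m + 1) * (m + 1 - 1) = 2 * c + 2 * m := by
      have hh : (m + 1) * (m + 1 - 1) = m * (m - 1) + 2 * m := by
        cases m with
        | zero => rfl
        | succ k => simp only [Nat.succ_sub_one]; ring
      rw [hh, hc]
    rw [hc, h2]
    omega

section Cards
variable {n i : ℕ}

lemma cardP (hn : 2 ≤ n) (hi1 : 1 ≤ i) (hi2 : i ≤ n - 1) :
    (Finset.univ.filter (fun p : LKIdx n =>
      ((p.1.1 : ℕ) = i ∧ (p.1.2 : ℕ) ≠ i + 1) ∨ (p.1.2 : ℕ) = i)).card = n - 2 := by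
  have hbij := Finset.card_bij'
    (s := Finset.univ.filter (fun p : LKIdx n =>
      ((p.1.1 : ℕ) = i ∧ (p.1.2 : ℕ) ≠ i + 1) ∨ (p.1.2 : ℕ) = i))
    (t := Finset.Ico 1 i ∪ Finset.Ioc (i + 1) n)
    (fun p _ => if (p.1.2 : ℕ) = i then (p.1.1 : ℕ) else (p.1.2 : ℕ))
    (fun m hm =>
      if hmi : m < i then
        mk n m i (by simp only [Finset.mem_union, Finset.mem_Ico, Finset.mem_Ioc] at hm; omega)
          hmi (by omega)
      else
        mk n i m hi1
          (by simp only [Finset.mem_union, Finset.mem_Ico, Finset.mem_Ioc] at hm; omega)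
          (by simp only [Finset.mem_union, Finset.mem_Ico, Finset.mem_Ioc] at hm; omega))
    ?_ ?_ ?_ ?_
  · rw [hbij, Finset.card_union_of_disjoint, Nat.card_Ico, Nat.card_Ioc]
    · omega
    · rw [Finset.disjoint_left]
      intro a ha ha2
      simp only [Finset.mem_Ico, Finset.mem_Ioc] at ha ha2
      omega
  · intro p hp
    obtain ⟨h1, h2, h3⟩ := lkBounds p
    simp only [Finset.mem_filter, Finset.mem_univ, true_and] at hp
    simp only [Finset.mem_union, Finset.mem_Ico, Finset.mem_Ioc]
    split_ifs <;> omega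
  · intro m hm
    simp only [Finset.mem_union, Finset.mem_Ico, Finset.mem_Ioc] at hm
    dsimp -failIfUnchanged only
    split_ifs <;>
      simp only [Finset.mem_filter, Finset.mem_univ, true_and, mk_fst, mk_snd,
        eq_self_iff_true, or_true, true_or, and_true] <;> omega
  · intro p hp
    obtain ⟨h1, h2, h3⟩ := lkBounds p
    simp only [Finset.mem_filter, Finset.mem_univ, true_and] at hp
    dsimp -failIfUnchanged only
    split_ifs <;> (apply ext' <;> simp only [mk_fst, mk_snd] <;> omega)
  · intro m hm
    simp only [Finset.mem_union, Finset.mem_Ico, Finset.mem_Ioc] at hm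
    dsimp -failIfUnchanged only
    split_ifs <;> simp only [mk_fst, mk_snd, eq_self_iff_true, not_true_eq_false] at * <;> omega

lemma cardF (hn : 2 ≤ n) (hi1 : 1 ≤ i) (hi2 : i ≤ n - 1) :
    (Finset.univ.filter (fun p : LKIdx n =>
      (p.1.1 : ℕ) ≠ i ∧ (p.1.1 : ℕ) ≠ i + 1 ∧ (p.1.2 : ℕ) ≠ i ∧ (p.1.2 : ℕ) ≠ i + 1)).card
      = (n - 2) * (n - 3) / 2 := by
  have hbij := Finset.card_bij'
    (s := Finset.univ.filter (fun p : LKIdx n =>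
      (p.1.1 : ℕ) ≠ i ∧ (p.1.1 : ℕ) ≠ i + 1 ∧ (p.1.2 : ℕ) ≠ i ∧ (p.1.2 : ℕ) ≠ i + 1))
    (t := Tri (n - 2))
    (fun p _ => (if (p.1.1 : ℕ) < i then (p.1.1 : ℕ) else (p.1.1 : ℕ) - 2,
                 if (p.1.2 : ℕ) < i then (p.1.2 : ℕ) else (p.1.2 : ℕ) - 2))
    (fun m hm =>
      mk n (if m.1 < i then m.1 else m.1 + 2) (if m.2 < i then m.2 else m.2 + 2)
        (by rw [mem_Tri] at hm; split_ifs <;> omega)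
        (by rw [mem_Tri] at hm; split_ifs <;> omega)
        (by rw [mem_Tri] at hm; split_ifs <;> omega))
    ?_ ?_ ?_ ?_
  · have h32 : n - 2 - 1 = n - 3 := by omega
    rw [hbij, Tri_card, h32]
  · intro p hp
    obtain ⟨h1, h2, h3⟩ := lkBounds p
    simp only [Finset.mem_filter, Finset.mem_univ, true_and] at hp
    rw [mem_Tri]
    dsimp only
    split_ifs <;> omega
  · intro m hm
    rw [mem_Tri] at hm
    dsimp -failIfUnchanged only
    simp only [Finset.mem_filter, Finset.mem_univ, true_and, mk_fst, mk_snd]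
    split_ifs <;> omega
  · intro p hp
    obtain ⟨h1, h2, h3⟩ := lkBounds p
    simp only [Finset.mem_filter, Finset.mem_univ, true_and] at hp
    dsimp only
    apply ext' <;> simp only [mk_fst, mk_snd] <;> split_ifs <;> omega
  · intro m hm
    rw [mem_Tri] at hm
    dsimp -failIfUnchanged only
    simp only [mk_fst, mk_snd, Prod.ext_iff]
    refine ⟨?_, ?_⟩ <;> dsimp -failIfUnchanged only <;> split_ifs <;> omega

end Cards

end LKProof

open LKProof

/-- The eigenvalues (with multiplicity) of the Lawrence–Krammer matrix `ρ_n(σᵢ)` are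
`-tq²` (once), `-q` (`n-2` times) and `1` (`(n-1)(n-2)/2` times). -/
theorem stmt16 (n : ℕ) (hn : 2 ≤ n) (q t : ℂ) (hq0 : q ≠ 0) (ht0 : t ≠ 0)
    (hq : ∀ k : ℕ, 0 < k → q ^ k ≠ 1) (ht : ∀ k : ℕ, 0 < k → t ^ k ≠ 1)
    (i : ℕ) (hi1 : 1 ≤ i) (hi2 : i ≤ n - 1) :
    (LK n q t i).charpoly =
      (X - C (-t * q ^ 2)) * (X - C (-q)) ^ (n - 2) * (X - C 1) ^ ((n - 1) * (n - 2) / 2) := by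
  classical
  have hi2' : i + 1 ≤ n := by omega
  have hbt : (LK n q t i).BlockTriangular (bb n i) := by
    intro r c hlt
    by_contra hne
    exact absurd (key q t hi1 hne) (not_le.mpr hlt)
  have hcp : (LK n q t i).charpoly = ((LK n q t i).charmatrix).det := rfl
  rw [hcp, Matrix.BlockTriangular.det hbt.charmatrix, image_eq hn hi1 hi2,
    Finset.prod_image (injOnReps hi1)]
  have hE0mem : ∀ h1 h2 h3, (mk n i (i + 1) h1 h2 h3 : LKIdx n) = mk n i (i + 1) hi1 (Nat.lt_succ_self i) hi2' :=
    fun _ _ _ => rfl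
  set E0 : LKIdx n := mk n i (i + 1) hi1 (Nat.lt_succ_self i) hi2' with hE0
  set P := Finset.univ.filter (fun p : LKIdx n =>
    ((p.1.1 : ℕ) = i ∧ (p.1.2 : ℕ) ≠ i + 1) ∨ (p.1.2 : ℕ) = i) with hPdef
  set F := Finset.univ.filter (fun p : LKIdx n =>
    (p.1.1 : ℕ) ≠ i ∧ (p.1.1 : ℕ) ≠ i + 1 ∧ (p.1.2 : ℕ) ≠ i ∧ (p.1.2 : ℕ) ≠ i + 1) with hFdef
  have hE0v1 : (E0.1.1 : ℕ) = i := rfl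
  have hE0v2 : (E0.1.2 : ℕ) = i + 1 := rfl
  have hE0P : E0 ∉ P ∪ F := by
    rw [Finset.mem_union, hPdef, hFdef]
    simp only [Finset.mem_filter, Finset.mem_univ, true_and, hE0v1, hE0v2]
    omega
  have hPF : Disjoint P F := by
    rw [Finset.disjoint_left]
    intro p hp hf
    rw [hPdef, Finset.mem_filter] at hp
    rw [hFdef, Finset.mem_filter] at hf
    obtain ⟨hb1, hb2, hb3⟩ := lkBounds p
    omega
  have hRsplit : Finset.univ.filter (fun p : LKIdx n => isRep i p) = insert E0 (P ∪ F) := by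
    ext p
    obtain ⟨hb1, hb2, hb3⟩ := lkBounds p
    have hE : p = E0 ↔ ((p.1.1 : ℕ) = i ∧ (p.1.2 : ℕ) = i + 1) :=
      ⟨fun h => by rw [h]; exact ⟨rfl, rfl⟩, fun h => ext' h.1 h.2⟩
    rw [Finset.mem_filter]
    simp only [Finset.mem_insert, Finset.mem_union, hPdef, hFdef, Finset.mem_filter,
      Finset.mem_univ, true_and, isRep, hE]
    omega
  rw [hRsplit, Finset.prod_insert hE0P, Finset.prod_union hPF]
  have h1 : (((LK n q t i).charmatrix).toSquareBlock (bb n i) (bb n i E0)).det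
      = X - C (-t * q ^ 2) := detE0 hi1 E0 hE0v1 hE0v2
  have h2 : ∀ p ∈ P, (((LK n q t i).charmatrix).toSquareBlock (bb n i) (bb n i p)).det
      = (X - C 1) * (X - C (-q)) := by
    intro p hp
    obtain ⟨hb1, hb2, hb3⟩ := lkBounds p
    rw [hPdef, Finset.mem_filter] at hp
    rcases hp.2 with ⟨hpa, hpb⟩ | hpc
    · exact detPair1 hi1 p (mk n (i + 1) (p.1.2 : ℕ) (by omega) (by omega) (by omega))
        hpa (by omega) rfl rfl
    · exact detPair2 hi1 p (mk n (p.1.1 : ℕ) (i + 1) hb1 (by omega) hi2') hpc rfl rfl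
  have h3 : ∀ p ∈ F, (((LK n q t i).charmatrix).toSquareBlock (bb n i) (bb n i p)).det
      = X - C 1 := by
    intro p hp
    rw [hFdef, Finset.mem_filter] at hp
    exact detFix hi1 p hp.2.1 hp.2.2.1 hp.2.2.2.1 hp.2.2.2.2
  rw [h1, Finset.prod_congr rfl h2, Finset.prod_congr rfl h3, Finset.prod_const,
    Finset.prod_const, hPdef, hFdef, cardP hn hi1 hi2, cardF hn hi1 hi2]
  have harith : (n - 1) * (n - 2) / 2 = (n - 2) + (n - 2) * (n - 3) / 2 := by
    obtain ⟨c, hc⟩ : ∃ c, (n - 2) * (n - 3) = 2 * c := by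
      rcases Nat.even_or_odd (n - 2) with ⟨a, ha⟩ | ⟨a, ha⟩
      · exact ⟨a * (n - 3), by rw [ha]; ring⟩
      · have hm1 : n - 3 = 2 * a := by omega
        exact ⟨(n - 2) * a, by rw [hm1]; ring⟩
    have h12 : (n - 1) * (n - 2) = 2 * c + 2 * (n - 2) := by
      rcases Nat.lt_or_ge n 3 with h3 | h3
      · have hn2 : n = 2 := by omega
        subst hn2
        simpa using hc.symm
      · have ha : n - 1 = (n - 3) + 2 := by omega
        have hb : n - 2 = (n - 3) + 1 := by omega
        have : (n - 1) * (n - 2) = (n - 2) * (n - 3) + 2 * (n - 2) := by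
          rw [ha, hb]; ring
        rw [this, hc]
    rw [hc, h12]
    omega
  rw [harith, pow_add, mul_pow]
  ring
end
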